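/- Completeness of the coherent forcing models for generalized geometric implications: if T is a coherent theory (without equality), ⊩ the forcing relation of the coverage ◁_T on conditions (with renamings, variable substitutions, or term substitutions), φ a generalized geometric implication with variables in Y, (X;A) a condition, and ρ : Y → Tm(X) an environment, then (X;A) ⊩ φρ implies T, A ⊢_X φρ. In particular, if the empty condition forces a generalized geometric sentence φ, then T ⊢ φ. -/

import Mathlib

/- STATEMENT 17: completeness of the coherent forcing models for generalized geometric
implications. -/

namespace CoherentForcing

/- ## Syntax: terms, atoms, conditions, substitutions -/

/-- Ground terms over a signature of function symbols `F` with arities `far`,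
with named variables in ℕ. -/
inductive Tm (F : Type) (far : F → ℕ) : Type
  | fvar (x : ℕ) : Tm F far
  | app (f : F) (a : Fin (far f) → Tm F far) : Tm F far

variable {F : Type} {far : F → ℕ} {R : Type} {rar : R → ℕ}

/-- Free variables of a ground term. -/
def Tm.fv : Tm F far → Set ℕ
  | .fvar x => {x}
  | .app _ a => ⋃ i, (a i).fv

/-- Applying a substitution to a ground term. -/
def Tm.subst (σ : ℕ → Tm F far) : Tm F far → Tm F far
  | .fvar x => σ x
  | .app f a => .app f fun i => (a i).subst σ

/-- Atoms over relation symbols `R` with arities `rar`. -/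
abbrev Atom (F : Type) (far : F → ℕ) (R : Type) (rar : R → ℕ) : Type :=
  (r : R) × (Fin (rar r) → Tm F far)

/-- Free variables of an atom. -/
def Atom.fv (a : Atom F far R rar) : Set ℕ := ⋃ i, (a.2 i).fv

/-- Applying a substitution to an atom. -/
def Atom.subst (σ : ℕ → Tm F far) (a : Atom F far R rar) : Atom F far R rar :=
  ⟨a.1, fun i => (a.2 i).subst σ⟩

/-- A forcing condition (X;A): a finite set X of variables together with a finite
set A of atoms whose variables lie in X. -/
structure Cond (F : Type) (far : F → ℕ) (R : Type) (rar : R → ℕ) : Type where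
  X : Finset ℕ
  A : Set (Atom F far R rar)
  finA : A.Finite
  wf : ∀ a ∈ A, Atom.fv a ⊆ ↑X

/-- The three categories of forcing conditions: renamings, variable substitutions,
term substitutions. -/
inductive MC | rn | vs | ts

/-- `Mor mc D C σ`: the substitution `σ` is a morphism `D ⟶ C` of conditions in the
category determined by `mc`. -/
structure Mor (mc : MC) (D C : Cond F far R rar) (σ : ℕ → Tm F far) : Prop where
  fvsub : ∀ x ∈ C.X, (σ x).fv ⊆ ↑D.X
  atoms : ∀ a ∈ C.A, Atom.subst σ a ∈ D.A
  cls : match mc with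
    | .ts => True
    | .vs => ∀ x ∈ C.X, ∃ y, σ x = Tm.fvar y
    | .rn => (∀ x ∈ C.X, ∃ y, σ x = Tm.fvar y) ∧ Set.InjOn σ ↑C.X

/-- `σ` is an isomorphism of conditions `D ≅ C` (a bijective renaming). -/
def IsIsoMor (D C : Cond F far R rar) (σ : ℕ → Tm F far) : Prop :=
  Mor .rn D C σ ∧ ∃ τ : ℕ → Tm F far, Mor .rn C D τ ∧
    (∀ x ∈ C.X, (σ x).subst τ = Tm.fvar x) ∧ (∀ y ∈ D.X, (τ y).subst σ = Tm.fvar y)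

/-- A sink: a set of pairs (domain condition, substitution), thought of as a family of
morphisms into a fixed condition. -/
abbrev Sink (F : Type) (far : F → ℕ) (R : Type) (rar : R → ℕ) : Type :=
  Set (Cond F far R rar × (ℕ → Tm F far))

/- ## Formulas (infinitary first-order, locally nameless: named free variables,
de Bruijn indices for bound variables, the variable bound by the nearest enclosing
binder being the *last* index) -/

/-- Terms in context `n`: named free variables plus `n` de Bruijn indices. -/
inductive Tmc (F : Type) (far : F → ℕ) (n : ℕ) : Type
  | fvar (x : ℕ) : Tmc F far n
  | bvar (i : Fin n) : Tmc F far n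
  | app (f : F) (a : Fin (far f) → Tmc F far n) : Tmc F far n

/-- A ground term is a term in any context. -/
def Tm.toTmc {n : ℕ} : Tm F far → Tmc F far n
  | .fvar x => .fvar x
  | .app f a => .app f fun i => (a i).toTmc

/-- Evaluating a term in context via `σ` on free variables and `ρ` on indices. -/
def Tmc.eval (σ : ℕ → Tm F far) {n : ℕ} (ρ : Fin n → Tm F far) :
    Tmc F far n → Tm F far
  | .fvar x => σ x
  | .bvar i => ρ i
  | .app f a => .app f fun i => (a i).eval σ ρ

/-- Named free variables of a term in context. -/
def Tmc.fv {n : ℕ} : Tmc F far n → Set ℕ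
  | .fvar x => {x}
  | .bvar _ => ∅
  | .app _ a => ⋃ i, (a i).fv

/-- A term in context has no named free variables. -/
def Tmc.noFvar {n : ℕ} : Tmc F far n → Prop
  | .fvar _ => False
  | .bvar _ => True
  | .app _ a => ∀ i, (a i).noFvar

/-- Applying a substitution to the named free variables of a term in context. -/
def Tmc.substFv (σ : ℕ → Tm F far) {n : ℕ} : Tmc F far n → Tmc F far n
  | .fvar x => (σ x).toTmc
  | .bvar i => .bvar i
  | .app f a => .app f fun i => (a i).substFv σ

/-- (Possibly infinitary) first-order formulas in context `n`. -/
inductive Fml (F : Type) (far : F → ℕ) (R : Type) (rar : R → ℕ) : ℕ → Type 1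
  | atom {n : ℕ} (r : R) (ts : Fin (rar r) → Tmc F far n) : Fml F far R rar n
  | eq {n : ℕ} (s t : Tmc F far n) : Fml F far R rar n
  | top {n : ℕ} : Fml F far R rar n
  | bot {n : ℕ} : Fml F far R rar n
  | conj {n : ℕ} : Fml F far R rar n → Fml F far R rar n → Fml F far R rar n
  | disj {n : ℕ} (I : Type) (f : I → Fml F far R rar n) : Fml F far R rar n
  | imp {n : ℕ} : Fml F far R rar n → Fml F far R rar n → Fml F far R rar n
  | all {n : ℕ} : Fml F far R rar (n + 1) → Fml F far R rar n
  | ex {n : ℕ} : Fml F far R rar (n + 1) → Fml F far R rar n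

/-- Negation. -/
abbrev Fml.neg {n : ℕ} (φ : Fml F far R rar n) : Fml F far R rar n := .imp φ .bot

/-- Named free variables of a formula. -/
def Fml.fv : {n : ℕ} → Fml F far R rar n → Set ℕ
  | _, .atom _ ts => ⋃ i, (ts i).fv
  | _, .eq s t => s.fv ∪ t.fv
  | _, .top => ∅
  | _, .bot => ∅
  | _, .conj φ ψ => φ.fv ∪ ψ.fv
  | _, .disj _ f => ⋃ i, (f i).fv
  | _, .imp φ ψ => φ.fv ∪ ψ.fv
  | _, .all φ => φ.fv
  | _, .ex φ => φ.fv

/-- Applying a substitution to the named free variables of a formula. -/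
def Fml.substFv (σ : ℕ → Tm F far) : {n : ℕ} → Fml F far R rar n → Fml F far R rar n
  | _, .atom r ts => .atom r fun i => (ts i).substFv σ
  | _, .eq s t => .eq (s.substFv σ) (t.substFv σ)
  | _, .top => .top
  | _, .bot => .bot
  | _, .conj φ ψ => .conj (φ.substFv σ) (ψ.substFv σ)
  | _, .disj I f => .disj I fun i => (f i).substFv σ
  | _, .imp φ ψ => .imp (φ.substFv σ) (ψ.substFv σ)
  | _, .all φ => .all (φ.substFv σ)
  | _, .ex φ => .ex (φ.substFv σ)

/-- Shifting de Bruijn indices of a term into an extended context. -/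
def Tmc.shift {k : ℕ} : Tmc F far k → Tmc F far (k + 1)
  | .fvar x => .fvar x
  | .bvar i => .bvar i.castSucc
  | .app f a => .app f fun i => (a i).shift

/-- Simultaneous substitution for the de Bruijn indices of a term. -/
def Tmc.bsubst {m k : ℕ} (θ : Fin m → Tmc F far k) : Tmc F far m → Tmc F far k
  | .fvar x => .fvar x
  | .bvar i => θ i
  | .app f a => .app f fun i => (a i).bsubst θ

/-- Extending a de Bruijn substitution under a binder. -/
def extendB {m k : ℕ} (θ : Fin m → Tmc F far k) : Fin (m + 1) → Tmc F far (k + 1) :=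
  Fin.snoc (fun i => (θ i).shift) (.bvar (Fin.last k))

/-- Simultaneous substitution for the de Bruijn indices of a formula. -/
def Fml.bsubst : {m k : ℕ} → (Fin m → Tmc F far k) → Fml F far R rar m → Fml F far R rar k
  | _, _, θ, .atom r ts => .atom r fun i => (ts i).bsubst θ
  | _, _, θ, .eq s t => .eq (s.bsubst θ) (t.bsubst θ)
  | _, _, _, .top => .top
  | _, _, _, .bot => .bot
  | _, _, θ, .conj φ ψ => .conj (φ.bsubst θ) (ψ.bsubst θ)
  | _, _, θ, .disj I f => .disj I fun i => (f i).bsubst θ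
  | _, _, θ, .imp φ ψ => .imp (φ.bsubst θ) (ψ.bsubst θ)
  | _, _, θ, .all φ => .all (φ.bsubst (extendB θ))
  | _, _, θ, .ex φ => .ex (φ.bsubst (extendB θ))

/-- Opening the outermost binder of a one-variable formula with a ground term. -/
def Fml.open0 (t : Tm F far) (φ : Fml F far R rar 1) : Fml F far R rar 0 :=
  φ.bsubst fun _ => t.toTmc

/- ## Coherent theories and the generated coverage -/

/-- Atoms in context `n` (for the components of coherent axioms). -/
abbrev CAtom (F : Type) (far : F → ℕ) (R : Type) (rar : R → ℕ) (n : ℕ) : Type :=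
  (r : R) × (Fin (rar r) → Tmc F far n)

/-- Instantiating an atom in context `m` by an assignment of its de Bruijn variables. -/
def CAtom.inst {m : ℕ} (ι : Fin m → Tm F far) (a : CAtom F far R rar m) :
    Atom F far R rar :=
  ⟨a.1, fun i => (a.2 i).eval Tm.fvar ι⟩

/-- A coherent axiom ∀ x₁…x_m (φ₀ → ⋁_d ∃ y₁…y_{k_d}. φ_d), where the φ's are finite
conjunctions of atoms (as lists), presented without named free variables. -/
structure CohAx (F : Type) (far : F → ℕ) (R : Type) (rar : R → ℕ) : Type where
  m : ℕ
  hyp : List (CAtom F far R rar m)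
  concl : List ((k : ℕ) × List (CAtom F far R rar (m + k)))
  hypClosed : ∀ a ∈ hyp, ∀ i, (a.2 i).noFvar
  conclClosed : ∀ d ∈ concl, ∀ a ∈ d.2, ∀ i, (a.2 i).noFvar

/-- The `j`-th fresh variable not occurring in the condition `C`. -/
def freshVar (C : Cond F far R rar) (j : ℕ) : ℕ := C.X.sup id + 1 + j

lemma Tm.fv_eval {n : ℕ} (ι : Fin n → Tm F far) (t : Tmc F far n) (ht : t.noFvar) :
    (t.eval Tm.fvar ι).fv ⊆ ⋃ j, (ι j).fv := by
  induction t with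
  | fvar x => exact absurd ht id
  | bvar i => exact Set.subset_iUnion (fun j => (ι j).fv) i
  | app f a ih =>
    intro y hy
    obtain ⟨i, hi⟩ := Set.mem_iUnion.mp hy
    exact ih i (ht i) hi

/-- The extension (X, y⃗; A, φ_d) of a condition by one disjunct of an instantiated
coherent axiom, using fresh variables y⃗ for the existentially bound variables. -/
def Cond.extend (C : Cond F far R rar) {m k : ℕ} (ι : Fin m → Tm F far)
    (hι : ∀ i, (ι i).fv ⊆ ↑C.X) (ats : List (CAtom F far R rar (m + k)))
    (hats : ∀ a ∈ ats, ∀ i, (a.2 i).noFvar) : Cond F far R rar where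
  X := C.X ∪ Finset.image (fun j : Fin k => freshVar C j) Finset.univ
  A := C.A ∪ (CAtom.inst (Fin.append ι fun j : Fin k => Tm.fvar (freshVar C j))) ''
        {a | a ∈ ats}
  finA := C.finA.union (ats.finite_toSet.image _)
  wf := by
    rintro a (ha | ⟨b, hb, rfl⟩)
    · exact (C.wf a ha).trans (by intro y hy; simp only [Finset.coe_union]; exact Or.inl hy)
    · intro y hy
      obtain ⟨i, hi⟩ := Set.mem_iUnion.mp hy
      obtain ⟨j, hj⟩ := Set.mem_iUnion.mp (Tm.fv_eval _ _ (hats b hb i) hi)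
      simp only [Finset.coe_union, Finset.coe_image, Set.mem_union]
      revert hj
      refine Fin.addCases (fun i0 hj => ?_) (fun j0 hj => ?_) j
      · rw [Fin.append_left] at hj
        exact Or.inl (hι i0 hj)
      · rw [Fin.append_right] at hj
        rcases hj with rfl
        exact Or.inr ⟨j0, Finset.mem_coe.mpr (Finset.mem_univ j0), rfl⟩

/-- The coverage ◁_T generated by a coherent theory `T`: isomorphism singletons are
covers, and for each instance of an axiom of `T` applicable at `C`, the union of
covers of the extensions of `C` by the disjuncts is a cover of `C` (the connecting
morphisms being the identity substitutions). -/
inductive Cov (T : Set (CohAx F far R rar)) :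
    Cond F far R rar → Sink F far R rar → Prop
  | iso {C D : Cond F far R rar} {σ : ℕ → Tm F far} (h : IsIsoMor D C σ) :
      Cov T C {(D, σ)}
  | step {C : Cond F far R rar} (ax : CohAx F far R rar) (hax : ax ∈ T)
      (ι : Fin ax.m → Tm F far) (hι : ∀ i, (ι i).fv ⊆ ↑C.X)
      (hhyp : ∀ a ∈ ax.hyp, CAtom.inst ι a ∈ C.A)
      (U : Fin ax.concl.length → Sink F far R rar)
      (hU : ∀ i : Fin ax.concl.length,
        Cov T (C.extend ι hι (ax.concl.get i).2
            (fun a ha j => ax.conclClosed _ (List.get_mem _ i) a ha j))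
          (U i)) :
      Cov T C (⋃ i, U i)

/- ## The forcing relation -/

/-- The forcing relation `C ⊩ φ[σ, ρ]`, where `mc` determines the category of
conditions (renamings / variable substitutions / term substitutions), `cov` is a
coverage, `σ` interprets the named free variables and `ρ` the de Bruijn variables
of `φ` by terms over `C`. -/
def Forces (mc : MC) (cov : Cond F far R rar → Sink F far R rar → Prop) :
    {n : ℕ} → Cond F far R rar → (ℕ → Tm F far) → (Fin n → Tm F far) →
      Fml F far R rar n → Prop
  | _, C, σ, ρ, .atom r ts => ∃ U, cov C U ∧ ∀ p ∈ U,
      (⟨r, fun i => ((ts i).eval σ ρ).subst p.2⟩ : Atom F far R rar) ∈ p.1.A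
  | _, C, σ, ρ, .eq s t => ∃ U, cov C U ∧ ∀ p ∈ U,
      (s.eval σ ρ).subst p.2 = (t.eval σ ρ).subst p.2
  | _, _, _, _, .top => True
  | _, C, _, _, .bot => cov C ∅
  | _, C, σ, ρ, .conj φ ψ => Forces mc cov C σ ρ φ ∧ Forces mc cov C σ ρ ψ
  | _, C, σ, ρ, .disj _ f => ∃ U, cov C U ∧ ∀ p ∈ U, ∃ i,
      Forces mc cov p.1 (fun x => (σ x).subst p.2) (fun i0 => (ρ i0).subst p.2) (f i)
  | _, C, σ, ρ, .imp φ ψ => ∀ D τ, Mor mc D C τ →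
      Forces mc cov D (fun x => (σ x).subst τ) (fun i => (ρ i).subst τ) φ →
      Forces mc cov D (fun x => (σ x).subst τ) (fun i => (ρ i).subst τ) ψ
  | _, C, σ, ρ, .all φ => ∀ D τ, Mor mc D C τ → ∀ t : Tm F far, t.fv ⊆ ↑D.X →
      Forces mc cov D (fun x => (σ x).subst τ)
        (Fin.snoc (fun i => (ρ i).subst τ) t) φ
  | _, C, σ, ρ, .ex φ => ∃ U, cov C U ∧ ∀ p ∈ U, ∃ t, t.fv ⊆ ↑p.1.X ∧
      Forces mc cov p.1 (fun x => (σ x).subst p.2)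
        (Fin.snoc (fun i => (ρ i).subst p.2) t) φ

/- ## Provability -/

/-- Intuitionistic (or, when `em` holds, classical) provability `Γ ⊢_X φ` in logic
without equality, sound for empty domains: `X` is the set of free variables allowed
in the derivation. -/
inductive Prv (em : Prop) :
    Finset ℕ → Set (Fml F far R rar 0) → Fml F far R rar 0 → Prop
  | ax {X Γ φ} (h : φ ∈ Γ) : Prv em X Γ φ
  | topI {X Γ} : Prv em X Γ .top
  | botE {X Γ φ} : Prv em X Γ .bot → Prv em X Γ φ
  | conjI {X Γ φ ψ} : Prv em X Γ φ → Prv em X Γ ψ → Prv em X Γ (.conj φ ψ)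
  | conjE1 {X Γ φ ψ} : Prv em X Γ (.conj φ ψ) → Prv em X Γ φ
  | conjE2 {X Γ φ ψ} : Prv em X Γ (.conj φ ψ) → Prv em X Γ ψ
  | disjI {X Γ I} {f : I → Fml F far R rar 0} (i : I) :
      Prv em X Γ (f i) → Prv em X Γ (.disj I f)
  | disjE {X Γ I} {f : I → Fml F far R rar 0} {ψ} :
      Prv em X Γ (.disj I f) → (∀ i, Prv em X (insert (f i) Γ) ψ) → Prv em X Γ ψ
  | impI {X Γ φ ψ} : Prv em X (insert φ Γ) ψ → Prv em X Γ (.imp φ ψ)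
  | impE {X Γ φ ψ} : Prv em X Γ (.imp φ ψ) → Prv em X Γ φ → Prv em X Γ ψ
  | allI {X : Finset ℕ} {Γ} {φ} (x : ℕ) (hx : x ∉ X) (hφ : x ∉ Fml.fv (.all φ))
      (hΓ : ∀ ψ ∈ Γ, x ∉ Fml.fv ψ) :
      Prv em (insert x X) Γ (Fml.open0 (.fvar x) φ) → Prv em X Γ (.all φ)
  | allE {X : Finset ℕ} {Γ} {φ} (t : Tm F far) (ht : t.fv ⊆ ↑X) :
      Prv em X Γ (.all φ) → Prv em X Γ (Fml.open0 t φ)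
  | exI {X : Finset ℕ} {Γ} {φ} (t : Tm F far) (ht : t.fv ⊆ ↑X) :
      Prv em X Γ (Fml.open0 t φ) → Prv em X Γ (.ex φ)
  | exE {X : Finset ℕ} {Γ} {φ} {ψ} (x : ℕ) (hx : x ∉ X) (hφ : x ∉ Fml.fv (.ex φ)) (hψ : x ∉ Fml.fv ψ)
      (hΓ : ∀ χ ∈ Γ, x ∉ Fml.fv χ) :
      Prv em X Γ (.ex φ) →
      Prv em (insert x X) (insert (Fml.open0 (.fvar x) φ) Γ) ψ → Prv em X Γ ψ
  | em {X Γ} (φ : Fml F far R rar 0) (h : em) :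
      Prv em X Γ (.disj Bool fun b => bif b then φ else φ.neg)

/- ## Coherent axioms as formulas -/

/-- An atom of a condition, as a closed formula. -/
def atomF (a : Atom F far R rar) : Fml F far R rar 0 :=
  .atom a.1 fun i => (a.2 i).toTmc

/-- Universal closure. -/
def Fml.alls : (m : ℕ) → Fml F far R rar m → Fml F far R rar 0
  | 0, φ => φ
  | m + 1, φ => Fml.alls m (.all φ)

/-- Iterated existential quantification. -/
def Fml.exs {m : ℕ} : (k : ℕ) → Fml F far R rar (m + k) → Fml F far R rar m
  | 0, φ => φ
  | k + 1, φ => Fml.exs k (.ex φ)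

/-- Conjunction of a list of atoms in context. -/
def listConj {n : ℕ} (l : List (CAtom F far R rar n)) : Fml F far R rar n :=
  l.foldr (fun a ψ => .conj (.atom a.1 a.2) ψ) .top

/-- A coherent axiom as a sentence: ∀ x⃗ (φ₀ → ⋁_d ∃ y⃗_d. φ_d). -/
def CohAx.toFml (ax : CohAx F far R rar) : Fml F far R rar 0 :=
  .alls ax.m (.imp (listConj ax.hyp)
    (.disj (Fin ax.concl.length) fun i =>
      .exs (ax.concl.get i).1 (listConj (ax.concl.get i).2)))

/- ## Classes of formulas -/

/-- Generalized geometric implications (in logic without equality):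
φ ::= α | φ₁ ∧ φ₂ | ⋁ᵢ φᵢ | ∃x.φ | ∀x.φ | (α → φ) with α an atom, ⊤ or ⊥. -/
inductive GGI : {n : ℕ} → Fml F far R rar n → Prop
  | atom {n r ts} : GGI (n := n) (.atom r ts)
  | top {n} : GGI (n := n) .top
  | bot {n} : GGI (n := n) .bot
  | conj {n} {φ ψ : Fml F far R rar n} : GGI φ → GGI ψ → GGI (.conj φ ψ)
  | disj {n I} {f : I → Fml F far R rar n} : (∀ i, GGI (f i)) → GGI (.disj I f)
  | ex {n} {φ : Fml F far R rar (n + 1)} : GGI φ → GGI (.ex φ)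
  | all {n} {φ : Fml F far R rar (n + 1)} : GGI φ → GGI (.all φ)
  | impAtom {n r ts} {φ : Fml F far R rar n} : GGI φ → GGI (.imp (.atom r ts) φ)
  | impTop {n} {φ : Fml F far R rar n} : GGI φ → GGI (.imp .top φ)
  | impBot {n} {φ : Fml F far R rar n} : GGI φ → GGI (.imp .bot φ)

/-- Positive formulas (no equality): built from atoms, ⊤, ⊥ by ∧, ⋁, ∃. -/
inductive Pos : {n : ℕ} → Fml F far R rar n → Prop
  | atom {n r ts} : Pos (n := n) (.atom r ts)
  | top {n} : Pos (n := n) .top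
  | bot {n} : Pos (n := n) .bot
  | conj {n} {φ ψ : Fml F far R rar n} : Pos φ → Pos ψ → Pos (.conj φ ψ)
  | disj {n I} {f : I → Fml F far R rar n} : (∀ i, Pos (f i)) → Pos (.disj I f)
  | ex {n} {φ : Fml F far R rar (n + 1)} : Pos φ → Pos (.ex φ)

/-- Geometric implications: universally quantified implications between positive
formulas. -/
inductive GeomImp : {n : ℕ} → Fml F far R rar n → Prop
  | base {n} {φ ψ : Fml F far R rar n} : Pos φ → Pos ψ → GeomImp (Fml.imp φ ψ)
  | all {n} {φ : Fml F far R rar (n + 1)} : GeomImp φ → GeomImp (Fml.all φ)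


/-- The empty condition (;). -/
def emptyCond : Cond F far R rar :=
  ⟨∅, ∅, Set.finite_empty, fun a ha => absurd ha (Set.notMem_empty a)⟩
/- ## Auxiliary lemmas: terms -/

theorem Tm.subst_congr {σ σ' : ℕ → Tm F far} {t : Tm F far}
    (h : ∀ x ∈ t.fv, σ x = σ' x) : t.subst σ = t.subst σ' := by
  induction t with
  | fvar x => exact h x rfl
  | app f a ih =>
    simp only [Tm.subst, Tm.app.injEq, heq_eq_eq, true_and]
    funext i
    exact ih i fun x hx => h x (Set.mem_iUnion.mpr ⟨i, hx⟩)

theorem Tm.subst_id (t : Tm F far) : t.subst Tm.fvar = t := by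
  induction t with
  | fvar x => rfl
  | app f a ih =>
    simp only [Tm.subst, Tm.app.injEq, heq_eq_eq, true_and]
    funext i; exact ih i

theorem Tm.subst_subst (σ σ' : ℕ → Tm F far) (t : Tm F far) :
    (t.subst σ).subst σ' = t.subst (fun x => (σ x).subst σ') := by
  induction t with
  | fvar x => rfl
  | app f a ih =>
    simp only [Tm.subst, Tm.app.injEq, heq_eq_eq, true_and]
    funext i; exact ih i

theorem Tm.fv_subst (σ : ℕ → Tm F far) (t : Tm F far) :
    (t.subst σ).fv ⊆ ⋃ x ∈ t.fv, (σ x).fv := by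
  induction t with
  | fvar x => simp [Tm.subst, Tm.fv]
  | app f a ih =>
    simp only [Tm.subst, Tm.fv]
    intro y hy
    obtain ⟨i, hi⟩ := Set.mem_iUnion.mp hy
    obtain ⟨x, hx, hfv⟩ := Set.mem_iUnion₂.mp (ih i hi)
    exact Set.mem_iUnion₂.mpr ⟨x, Set.mem_iUnion.mpr ⟨i, hx⟩, hfv⟩

/- toTmc lemmas -/

theorem Tm.toTmc_bsubst {m k : ℕ} (θ : Fin m → Tmc F far k) (t : Tm F far) :
    (t.toTmc : Tmc F far m).bsubst θ = t.toTmc := by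
  induction t with
  | fvar x => rfl
  | app f a ih =>
    simp only [Tm.toTmc, Tmc.bsubst, Tmc.app.injEq, heq_eq_eq, true_and]
    funext i; exact ih i

theorem Tm.toTmc_shift {k : ℕ} (t : Tm F far) :
    (t.toTmc : Tmc F far k).shift = t.toTmc := by
  induction t with
  | fvar x => rfl
  | app f a ih =>
    simp only [Tm.toTmc, Tmc.shift, Tmc.app.injEq, heq_eq_eq, true_and]
    funext i; exact ih i

theorem Tm.toTmc_substFv {n : ℕ} (σ : ℕ → Tm F far) (t : Tm F far) :
    (t.toTmc : Tmc F far n).substFv σ = (t.subst σ).toTmc := by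
  induction t with
  | fvar x => rfl
  | app f a ih =>
    simp only [Tm.toTmc, Tm.subst, Tmc.substFv, Tmc.app.injEq, heq_eq_eq, true_and]
    funext i; exact ih i

theorem Tm.toTmc_fv {n : ℕ} (t : Tm F far) : (t.toTmc : Tmc F far n).fv = t.fv := by
  induction t with
  | fvar x => rfl
  | app f a ih =>
    simp only [Tm.toTmc, Tmc.fv, Tm.fv]
    exact Set.iUnion_congr ih

/- Tmc lemmas -/

theorem Tmc.substFv_congr {σ σ' : ℕ → Tm F far} {n : ℕ} {t : Tmc F far n}
    (h : ∀ x ∈ t.fv, σ x = σ' x) : t.substFv σ = t.substFv σ' := by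
  induction t with
  | fvar x => simp only [Tmc.substFv, h x rfl]
  | bvar i => rfl
  | app f a ih =>
    simp only [Tmc.substFv, Tmc.app.injEq, heq_eq_eq, true_and]
    funext i
    exact ih i fun x hx => h x (Set.mem_iUnion.mpr ⟨i, hx⟩)

theorem Tmc.substFv_id {n : ℕ} (t : Tmc F far n) : t.substFv Tm.fvar = t := by
  induction t with
  | fvar x => rfl
  | bvar i => rfl
  | app f a ih =>
    simp only [Tmc.substFv, Tmc.app.injEq, heq_eq_eq, true_and]
    funext i; exact ih i

theorem Tmc.substFv_substFv (σ σ' : ℕ → Tm F far) {n : ℕ} (t : Tmc F far n) :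
    (t.substFv σ).substFv σ' = t.substFv (fun x => (σ x).subst σ') := by
  induction t with
  | fvar x => exact Tm.toTmc_substFv σ' (σ x)
  | bvar i => rfl
  | app f a ih =>
    simp only [Tmc.substFv, Tmc.app.injEq, heq_eq_eq, true_and]
    funext i; exact ih i

theorem Tmc.fv_substFv (σ : ℕ → Tm F far) {n : ℕ} (t : Tmc F far n) :
    (t.substFv σ).fv ⊆ ⋃ x ∈ t.fv, (σ x).fv := by
  induction t with
  | fvar x => simp [Tmc.substFv, Tmc.fv, Tm.toTmc_fv]
  | bvar i => simp [Tmc.substFv, Tmc.fv]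
  | app f a ih =>
    simp only [Tmc.substFv, Tmc.fv]
    intro y hy
    obtain ⟨i, hi⟩ := Set.mem_iUnion.mp hy
    obtain ⟨x, hx, hfv⟩ := Set.mem_iUnion₂.mp (ih i hi)
    exact Set.mem_iUnion₂.mpr ⟨x, Set.mem_iUnion.mpr ⟨i, hx⟩, hfv⟩

theorem Tmc.fv_shift {k : ℕ} (t : Tmc F far k) : t.shift.fv = t.fv := by
  induction t with
  | fvar x => rfl
  | bvar i => rfl
  | app f a ih =>
    simp only [Tmc.shift, Tmc.fv]
    exact Set.iUnion_congr ih

theorem Tmc.fv_bsubst {m k : ℕ} (θ : Fin m → Tmc F far k) (t : Tmc F far m) :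
    (t.bsubst θ).fv ⊆ t.fv ∪ ⋃ i, (θ i).fv := by
  induction t with
  | fvar x => simp [Tmc.bsubst, Tmc.fv]
  | bvar i =>
    simp only [Tmc.bsubst, Tmc.fv]
    exact (Set.subset_iUnion (fun i => (θ i).fv) i).trans Set.subset_union_right
  | app f a ih =>
    simp only [Tmc.bsubst, Tmc.fv]
    intro y hy
    obtain ⟨i, hi⟩ := Set.mem_iUnion.mp hy
    rcases ih i hi with h | h
    · exact Or.inl (Set.mem_iUnion.mpr ⟨i, h⟩)
    · exact Or.inr h

theorem Tmc.bsubst_bsubst {m k l : ℕ} (θ : Fin m → Tmc F far k) (θ' : Fin k → Tmc F far l)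
    (t : Tmc F far m) : (t.bsubst θ).bsubst θ' = t.bsubst (fun i => (θ i).bsubst θ') := by
  induction t with
  | fvar x => exact Tm.toTmc_bsubst θ' (Tm.fvar x)
  | bvar i => rfl
  | app f a ih =>
    simp only [Tmc.bsubst, Tmc.app.injEq, heq_eq_eq, true_and]
    funext i; exact ih i

theorem Tmc.bsubst_id {m : ℕ} (t : Tmc F far m) : t.bsubst (fun i => .bvar i) = t := by
  induction t with
  | fvar x => rfl
  | bvar i => rfl
  | app f a ih =>
    simp only [Tmc.bsubst, Tmc.app.injEq, heq_eq_eq, true_and]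
    funext i; exact ih i

theorem Tmc.shift_bsubst {m k : ℕ} (η : Fin m → Tmc F far k) (t : Tmc F far m) :
    (t.shift).bsubst (extendB η) = (t.bsubst η).shift := by
  induction t with
  | fvar x => exact Tm.toTmc_bsubst _ (Tm.fvar x) |>.trans (Tm.toTmc_shift (Tm.fvar x)).symm
  | bvar i => simp [Tmc.shift, Tmc.bsubst, extendB, Fin.snoc_castSucc]
  | app f a ih =>
    simp only [Tmc.shift, Tmc.bsubst, Tmc.app.injEq, heq_eq_eq, true_and]
    funext i; exact ih i

theorem Tmc.substFv_shift {k : ℕ} (σ : ℕ → Tm F far) (t : Tmc F far k) :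
    (t.shift).substFv σ = (t.substFv σ).shift := by
  induction t with
  | fvar x => exact (Tm.toTmc_shift (σ x)).symm
  | bvar i => rfl
  | app f a ih =>
    simp only [Tmc.shift, Tmc.substFv, Tmc.app.injEq, heq_eq_eq, true_and]
    funext i; exact ih i

theorem Tmc.substFv_bsubst {m k : ℕ} (σ : ℕ → Tm F far) (θ : Fin m → Tmc F far k)
    (t : Tmc F far m) :
    (t.bsubst θ).substFv σ = (t.substFv σ).bsubst (fun i => (θ i).substFv σ) := by
  induction t with
  | fvar x => exact (Tm.toTmc_bsubst _ (σ x)).symm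
  | bvar i => rfl
  | app f a ih =>
    simp only [Tmc.bsubst, Tmc.substFv, Tmc.app.injEq, heq_eq_eq, true_and]
    funext i; exact ih i

/-- Instantiation: substituting free and bound variables is evaluation. -/
theorem Tmc.inst_eq {n k : ℕ} (σ : ℕ → Tm F far) (ρ : Fin n → Tm F far) (t : Tmc F far n) :
    (t.substFv σ).bsubst (fun i => ((ρ i).toTmc : Tmc F far k)) = (t.eval σ ρ).toTmc := by
  induction t with
  | fvar x => exact Tm.toTmc_bsubst _ (σ x)
  | bvar i => rfl
  | app f a ih =>
    simp only [Tmc.substFv, Tmc.bsubst, Tmc.eval, Tm.toTmc, Tmc.app.injEq, heq_eq_eq, true_and]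
    funext i; exact ih i

theorem Tmc.fv_eval {n : ℕ} (σ : ℕ → Tm F far) (ρ : Fin n → Tm F far) (t : Tmc F far n) :
    (t.eval σ ρ).fv ⊆ (⋃ x ∈ t.fv, (σ x).fv) ∪ ⋃ i, (ρ i).fv := by
  induction t with
  | fvar x => simp [Tmc.eval, Tmc.fv]
  | bvar i =>
    simp only [Tmc.eval, Tmc.fv]
    exact (Set.subset_iUnion (fun i => (ρ i).fv) i).trans Set.subset_union_right
  | app f a ih =>
    simp only [Tmc.eval, Tm.fv]
    intro y hy
    obtain ⟨i, hi⟩ := Set.mem_iUnion.mp hy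
    rcases ih i hi with h | h
    · obtain ⟨x, hx, hfv⟩ := Set.mem_iUnion₂.mp h
      exact Or.inl (Set.mem_iUnion₂.mpr ⟨x, Set.mem_iUnion.mpr ⟨i, hx⟩, hfv⟩)
    · exact Or.inr h

theorem Tmc.fv_noFvar {n : ℕ} {t : Tmc F far n} (h : t.noFvar) : t.fv = ∅ := by
  induction t with
  | fvar x => exact absurd h id
  | bvar i => rfl
  | app f a ih =>
    simp only [Tmc.fv]
    exact Set.iUnion_eq_empty.mpr fun i => ih i (h i)

theorem Tmc.eval_subst {n : ℕ} (τ : ℕ → Tm F far) (κ : Fin n → Tm F far)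
    {t : Tmc F far n} (h : t.noFvar) :
    (t.eval Tm.fvar κ).subst τ = t.eval Tm.fvar (fun i => (κ i).subst τ) := by
  induction t with
  | fvar x => exact absurd h id
  | bvar i => rfl
  | app f a ih =>
    simp only [Tmc.eval, Tm.subst, Tm.app.injEq, heq_eq_eq, true_and]
    funext i; exact ih i (h i)

/- Atom lemmas -/

theorem Atom.subst_congr {σ σ' : ℕ → Tm F far} {a : Atom F far R rar}
    (h : ∀ x ∈ a.fv, σ x = σ' x) : a.subst σ = a.subst σ' := by
  unfold Atom.subst
  congr 1
  funext i
  exact Tm.subst_congr fun x hx => h x (Set.mem_iUnion.mpr ⟨i, hx⟩)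

theorem Atom.subst_id (a : Atom F far R rar) : a.subst Tm.fvar = a := by
  unfold Atom.subst
  conv_rhs => rw [show a = ⟨a.1, a.2⟩ from rfl]
  congr 1
  funext i; exact Tm.subst_id (a.2 i)

theorem Atom.fv_subst (σ : ℕ → Tm F far) (a : Atom F far R rar) :
    (a.subst σ).fv ⊆ ⋃ x ∈ a.fv, (σ x).fv := by
  intro y hy
  obtain ⟨i, hi⟩ := Set.mem_iUnion.mp hy
  obtain ⟨x, hx, hfv⟩ := Set.mem_iUnion₂.mp (Tm.fv_subst σ (a.2 i) hi)
  exact Set.mem_iUnion₂.mpr ⟨x, Set.mem_iUnion.mpr ⟨i, hx⟩, hfv⟩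
/- ## extendB lemmas -/

theorem extendB_id {m : ℕ} :
    extendB (fun i : Fin m => (Tmc.bvar i : Tmc F far m)) = fun i => Tmc.bvar i := by
  funext i
  refine Fin.lastCases ?_ (fun j => ?_) i
  · simp [extendB, Fin.snoc_last]
  · simp [extendB, Fin.snoc_castSucc, Tmc.shift]

theorem extendB_comp {m k l : ℕ} (θ : Fin m → Tmc F far k) (θ' : Fin k → Tmc F far l) :
    (fun i => (extendB θ i).bsubst (extendB θ')) = extendB (fun i => (θ i).bsubst θ') := by
  funext i
  refine Fin.lastCases ?_ (fun j => ?_) i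
  · simp [extendB, Fin.snoc_last, Tmc.bsubst]
  · simp only [extendB, Fin.snoc_castSucc]
    exact Tmc.shift_bsubst θ' (θ j)

theorem extendB_substFv {m k : ℕ} (σ : ℕ → Tm F far) (θ : Fin m → Tmc F far k) :
    (fun i => (extendB θ i).substFv σ) = extendB (fun i => (θ i).substFv σ) := by
  funext i
  refine Fin.lastCases ?_ (fun j => ?_) i
  · simp [extendB, Fin.snoc_last, Tmc.substFv]
  · simp only [extendB, Fin.snoc_castSucc]
    exact Tmc.substFv_shift σ (θ j)

/- ## Fml lemmas -/

theorem Fml.substFv_congr {σ σ' : ℕ → Tm F far} : ∀ {n : ℕ} {φ : Fml F far R rar n},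
    (∀ x ∈ φ.fv, σ x = σ' x) → φ.substFv σ = φ.substFv σ' := by
  intro n φ
  induction φ with
  | atom r ts =>
    intro h
    simp only [Fml.substFv, Fml.atom.injEq, heq_eq_eq, true_and]
    funext i
    exact Tmc.substFv_congr fun x hx => h x (Set.mem_iUnion.mpr ⟨i, hx⟩)
  | eq s t =>
    intro h
    simp only [Fml.substFv, Fml.eq.injEq]
    exact ⟨Tmc.substFv_congr fun x hx => h x (Or.inl hx),
      Tmc.substFv_congr fun x hx => h x (Or.inr hx)⟩
  | top => intro _; rfl
  | bot => intro _; rfl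
  | conj φ ψ ihφ ihψ =>
    intro h
    simp only [Fml.substFv, Fml.conj.injEq]
    exact ⟨ihφ fun x hx => h x (Or.inl hx), ihψ fun x hx => h x (Or.inr hx)⟩
  | disj I f ih =>
    intro h
    simp only [Fml.substFv, Fml.disj.injEq, heq_eq_eq, true_and]
    funext i
    exact ih i fun x hx => h x (Set.mem_iUnion.mpr ⟨i, hx⟩)
  | imp φ ψ ihφ ihψ =>
    intro h
    simp only [Fml.substFv, Fml.imp.injEq]
    exact ⟨ihφ fun x hx => h x (Or.inl hx), ihψ fun x hx => h x (Or.inr hx)⟩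
  | all φ ih =>
    intro h
    simp only [Fml.substFv, Fml.all.injEq]
    exact ih h
  | ex φ ih =>
    intro h
    simp only [Fml.substFv, Fml.ex.injEq]
    exact ih h

theorem Fml.substFv_id : ∀ {n : ℕ} (φ : Fml F far R rar n), φ.substFv Tm.fvar = φ := by
  intro n φ
  induction φ with
  | atom r ts =>
    simp only [Fml.substFv, Fml.atom.injEq, heq_eq_eq, true_and]
    funext i; exact Tmc.substFv_id (ts i)
  | eq s t => simp only [Fml.substFv, Fml.eq.injEq]; exact ⟨Tmc.substFv_id s, Tmc.substFv_id t⟩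
  | top => rfl
  | bot => rfl
  | conj φ ψ ihφ ihψ => simp only [Fml.substFv, Fml.conj.injEq]; exact ⟨ihφ, ihψ⟩
  | disj I f ih =>
    simp only [Fml.substFv, Fml.disj.injEq, heq_eq_eq, true_and]
    funext i; exact ih i
  | imp φ ψ ihφ ihψ => simp only [Fml.substFv, Fml.imp.injEq]; exact ⟨ihφ, ihψ⟩
  | all φ ih => simp only [Fml.substFv, Fml.all.injEq]; exact ih
  | ex φ ih => simp only [Fml.substFv, Fml.ex.injEq]; exact ih

theorem Fml.substFv_substFv (σ σ' : ℕ → Tm F far) : ∀ {n : ℕ} (φ : Fml F far R rar n),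
    (φ.substFv σ).substFv σ' = φ.substFv (fun x => (σ x).subst σ') := by
  intro n φ
  induction φ with
  | atom r ts =>
    simp only [Fml.substFv, Fml.atom.injEq, heq_eq_eq, true_and]
    funext i; exact Tmc.substFv_substFv σ σ' (ts i)
  | eq s t =>
    simp only [Fml.substFv, Fml.eq.injEq]
    exact ⟨Tmc.substFv_substFv σ σ' s, Tmc.substFv_substFv σ σ' t⟩
  | top => rfl
  | bot => rfl
  | conj φ ψ ihφ ihψ => simp only [Fml.substFv, Fml.conj.injEq]; exact ⟨ihφ, ihψ⟩
  | disj I f ih =>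
    simp only [Fml.substFv, Fml.disj.injEq, heq_eq_eq, true_and]
    funext i; exact ih i
  | imp φ ψ ihφ ihψ => simp only [Fml.substFv, Fml.imp.injEq]; exact ⟨ihφ, ihψ⟩
  | all φ ih => simp only [Fml.substFv, Fml.all.injEq]; exact ih
  | ex φ ih => simp only [Fml.substFv, Fml.ex.injEq]; exact ih

theorem Fml.fv_substFv (σ : ℕ → Tm F far) : ∀ {n : ℕ} (φ : Fml F far R rar n),
    (φ.substFv σ).fv ⊆ ⋃ x ∈ φ.fv, (σ x).fv := by
  intro n φ
  induction φ with
  | atom r ts =>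
    simp only [Fml.substFv, Fml.fv]
    intro y hy
    obtain ⟨i, hi⟩ := Set.mem_iUnion.mp hy
    obtain ⟨x, hx, hfv⟩ := Set.mem_iUnion₂.mp (Tmc.fv_substFv σ (ts i) hi)
    exact Set.mem_iUnion₂.mpr ⟨x, Set.mem_iUnion.mpr ⟨i, hx⟩, hfv⟩
  | eq s t =>
    simp only [Fml.substFv, Fml.fv]
    intro y hy
    rcases hy with hy | hy
    · obtain ⟨x, hx, hfv⟩ := Set.mem_iUnion₂.mp (Tmc.fv_substFv σ s hy)
      exact Set.mem_iUnion₂.mpr ⟨x, Or.inl hx, hfv⟩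
    · obtain ⟨x, hx, hfv⟩ := Set.mem_iUnion₂.mp (Tmc.fv_substFv σ t hy)
      exact Set.mem_iUnion₂.mpr ⟨x, Or.inr hx, hfv⟩
  | top => simp [Fml.substFv, Fml.fv]
  | bot => simp [Fml.substFv, Fml.fv]
  | conj φ ψ ihφ ihψ =>
    simp only [Fml.substFv, Fml.fv]
    intro y hy
    rcases hy with hy | hy
    · obtain ⟨x, hx, hfv⟩ := Set.mem_iUnion₂.mp (ihφ hy)
      exact Set.mem_iUnion₂.mpr ⟨x, Or.inl hx, hfv⟩
    · obtain ⟨x, hx, hfv⟩ := Set.mem_iUnion₂.mp (ihψ hy)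
      exact Set.mem_iUnion₂.mpr ⟨x, Or.inr hx, hfv⟩
  | disj I f ih =>
    simp only [Fml.substFv, Fml.fv]
    intro y hy
    obtain ⟨i, hi⟩ := Set.mem_iUnion.mp hy
    obtain ⟨x, hx, hfv⟩ := Set.mem_iUnion₂.mp (ih i hi)
    exact Set.mem_iUnion₂.mpr ⟨x, Set.mem_iUnion.mpr ⟨i, hx⟩, hfv⟩
  | imp φ ψ ihφ ihψ =>
    simp only [Fml.substFv, Fml.fv]
    intro y hy
    rcases hy with hy | hy
    · obtain ⟨x, hx, hfv⟩ := Set.mem_iUnion₂.mp (ihφ hy)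
      exact Set.mem_iUnion₂.mpr ⟨x, Or.inl hx, hfv⟩
    · obtain ⟨x, hx, hfv⟩ := Set.mem_iUnion₂.mp (ihψ hy)
      exact Set.mem_iUnion₂.mpr ⟨x, Or.inr hx, hfv⟩
  | all φ ih => exact ih
  | ex φ ih => exact ih

theorem Fml.fv_bsubst : ∀ {m k : ℕ} (θ : Fin m → Tmc F far k) (φ : Fml F far R rar m),
    (φ.bsubst θ).fv ⊆ φ.fv ∪ ⋃ i, (θ i).fv := by
  intro m k θ φ
  induction φ generalizing k with
  | atom r ts =>
    simp only [Fml.bsubst, Fml.fv]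
    intro y hy
    obtain ⟨i, hi⟩ := Set.mem_iUnion.mp hy
    rcases Tmc.fv_bsubst θ (ts i) hi with h | h
    · exact Or.inl (Set.mem_iUnion.mpr ⟨i, h⟩)
    · exact Or.inr h
  | eq s t =>
    simp only [Fml.bsubst, Fml.fv]
    intro y hy
    rcases hy with hy | hy
    · rcases Tmc.fv_bsubst θ s hy with h | h
      · exact Or.inl (Or.inl h)
      · exact Or.inr h
    · rcases Tmc.fv_bsubst θ t hy with h | h
      · exact Or.inl (Or.inr h)
      · exact Or.inr h
  | top => simp [Fml.bsubst, Fml.fv]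
  | bot => simp [Fml.bsubst, Fml.fv]
  | conj φ ψ ihφ ihψ =>
    simp only [Fml.bsubst, Fml.fv]
    intro y hy
    rcases hy with hy | hy
    · rcases ihφ θ hy with h | h
      · exact Or.inl (Or.inl h)
      · exact Or.inr h
    · rcases ihψ θ hy with h | h
      · exact Or.inl (Or.inr h)
      · exact Or.inr h
  | disj I f ih =>
    simp only [Fml.bsubst, Fml.fv]
    intro y hy
    obtain ⟨i, hi⟩ := Set.mem_iUnion.mp hy
    rcases ih i θ hi with h | h
    · exact Or.inl (Set.mem_iUnion.mpr ⟨i, h⟩)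
    · exact Or.inr h
  | imp φ ψ ihφ ihψ =>
    simp only [Fml.bsubst, Fml.fv]
    intro y hy
    rcases hy with hy | hy
    · rcases ihφ θ hy with h | h
      · exact Or.inl (Or.inl h)
      · exact Or.inr h
    · rcases ihψ θ hy with h | h
      · exact Or.inl (Or.inr h)
      · exact Or.inr h
  | all φ ih =>
    intro y hy
    rcases ih (extendB θ) hy with h | h
    · exact Or.inl h
    · obtain ⟨i, hi⟩ := Set.mem_iUnion.mp h
      refine Fin.lastCases ?_ (fun j hj => ?_) i hi
      · intro hi
        simp [extendB, Fin.snoc_last, Tmc.fv] at hi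
      · simp only [extendB, Fin.snoc_castSucc, Tmc.fv_shift] at hj
        exact Or.inr (Set.mem_iUnion.mpr ⟨j, hj⟩)
  | ex φ ih =>
    intro y hy
    rcases ih (extendB θ) hy with h | h
    · exact Or.inl h
    · obtain ⟨i, hi⟩ := Set.mem_iUnion.mp h
      refine Fin.lastCases ?_ (fun j hj => ?_) i hi
      · intro hi
        simp [extendB, Fin.snoc_last, Tmc.fv] at hi
      · simp only [extendB, Fin.snoc_castSucc, Tmc.fv_shift] at hj
        exact Or.inr (Set.mem_iUnion.mpr ⟨j, hj⟩)

theorem Fml.bsubst_bsubst : ∀ {m k l : ℕ} (θ : Fin m → Tmc F far k)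
    (θ' : Fin k → Tmc F far l) (φ : Fml F far R rar m),
    (φ.bsubst θ).bsubst θ' = φ.bsubst (fun i => (θ i).bsubst θ') := by
  intro m k l θ θ' φ
  induction φ generalizing k l with
  | atom r ts =>
    simp only [Fml.bsubst, Fml.atom.injEq, heq_eq_eq, true_and]
    funext i; exact Tmc.bsubst_bsubst θ θ' (ts i)
  | eq s t =>
    simp only [Fml.bsubst, Fml.eq.injEq]
    exact ⟨Tmc.bsubst_bsubst θ θ' s, Tmc.bsubst_bsubst θ θ' t⟩
  | top => rfl
  | bot => rfl
  | conj φ ψ ihφ ihψ =>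
    simp only [Fml.bsubst, Fml.conj.injEq]
    exact ⟨ihφ θ θ', ihψ θ θ'⟩
  | disj I f ih =>
    simp only [Fml.bsubst, Fml.disj.injEq, heq_eq_eq, true_and]
    funext i; exact ih i θ θ'
  | imp φ ψ ihφ ihψ =>
    simp only [Fml.bsubst, Fml.imp.injEq]
    exact ⟨ihφ θ θ', ihψ θ θ'⟩
  | all φ ih =>
    simp only [Fml.bsubst, Fml.all.injEq]
    rw [ih (extendB θ) (extendB θ'), extendB_comp]
  | ex φ ih =>
    simp only [Fml.bsubst, Fml.ex.injEq]
    rw [ih (extendB θ) (extendB θ'), extendB_comp]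

theorem Fml.bsubst_id : ∀ {m : ℕ} (φ : Fml F far R rar m),
    φ.bsubst (fun i => .bvar i) = φ := by
  intro m φ
  induction φ with
  | atom r ts =>
    simp only [Fml.bsubst, Fml.atom.injEq, heq_eq_eq, true_and]
    funext i; exact Tmc.bsubst_id (ts i)
  | eq s t => simp only [Fml.bsubst, Fml.eq.injEq]; exact ⟨Tmc.bsubst_id s, Tmc.bsubst_id t⟩
  | top => rfl
  | bot => rfl
  | conj φ ψ ihφ ihψ => simp only [Fml.bsubst, Fml.conj.injEq]; exact ⟨ihφ, ihψ⟩
  | disj I f ih =>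
    simp only [Fml.bsubst, Fml.disj.injEq, heq_eq_eq, true_and]
    funext i; exact ih i
  | imp φ ψ ihφ ihψ => simp only [Fml.bsubst, Fml.imp.injEq]; exact ⟨ihφ, ihψ⟩
  | all φ ih =>
    simp only [Fml.bsubst, Fml.all.injEq]
    rw [extendB_id, ih]
  | ex φ ih =>
    simp only [Fml.bsubst, Fml.ex.injEq]
    rw [extendB_id, ih]

/-- Any de Bruijn substitution on a closed-context formula is trivial. -/
theorem Fml.bsubst_zero (φ : Fml F far R rar 0) (θ : Fin 0 → Tmc F far 0) :
    φ.bsubst θ = φ := by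
  have : θ = fun i => Tmc.bvar i := funext fun i => i.elim0
  rw [this, Fml.bsubst_id]

theorem Fml.substFv_bsubst (σ : ℕ → Tm F far) : ∀ {m k : ℕ} (θ : Fin m → Tmc F far k)
    (φ : Fml F far R rar m),
    (φ.bsubst θ).substFv σ = (φ.substFv σ).bsubst (fun i => (θ i).substFv σ) := by
  intro m k θ φ
  induction φ generalizing k with
  | atom r ts =>
    simp only [Fml.bsubst, Fml.substFv, Fml.atom.injEq, heq_eq_eq, true_and]
    funext i; exact Tmc.substFv_bsubst σ θ (ts i)
  | eq s t =>
    simp only [Fml.bsubst, Fml.substFv, Fml.eq.injEq]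
    exact ⟨Tmc.substFv_bsubst σ θ s, Tmc.substFv_bsubst σ θ t⟩
  | top => rfl
  | bot => rfl
  | conj φ ψ ihφ ihψ =>
    simp only [Fml.bsubst, Fml.substFv, Fml.conj.injEq]
    exact ⟨ihφ θ, ihψ θ⟩
  | disj I f ih =>
    simp only [Fml.bsubst, Fml.substFv, Fml.disj.injEq, heq_eq_eq, true_and]
    funext i; exact ih i θ
  | imp φ ψ ihφ ihψ =>
    simp only [Fml.bsubst, Fml.substFv, Fml.imp.injEq]
    exact ⟨ihφ θ, ihψ θ⟩
  | all φ ih =>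
    simp only [Fml.bsubst, Fml.substFv, Fml.all.injEq]
    rw [ih (extendB θ), extendB_substFv]
  | ex φ ih =>
    simp only [Fml.bsubst, Fml.substFv, Fml.ex.injEq]
    rw [ih (extendB θ), extendB_substFv]

theorem Fml.substFv_open0 (σ : ℕ → Tm F far) (t : Tm F far) (φ : Fml F far R rar 1) :
    (Fml.open0 t φ).substFv σ = Fml.open0 (t.subst σ) (φ.substFv σ) := by
  unfold Fml.open0
  rw [Fml.substFv_bsubst]
  congr 1
  funext i
  exact Tm.toTmc_substFv σ t
/- ## Iterated extension of de Bruijn substitutions -/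

def extendBs {m k₀ : ℕ} : (k : ℕ) → (Fin m → Tmc F far k₀) → Fin (m + k) → Tmc F far (k₀ + k)
  | 0, θ => θ
  | k + 1, θ => extendB (extendBs k θ)

theorem Fml.exs_bsubst {m k₀ : ℕ} : ∀ (k : ℕ) (θ : Fin m → Tmc F far k₀)
    (φ : Fml F far R rar (m + k)),
    (Fml.exs k φ).bsubst θ = Fml.exs k (φ.bsubst (extendBs k θ)) := by
  intro k
  induction k with
  | zero => intro θ φ; rfl
  | succ k ih =>
    intro θ φ
    show (Fml.exs k (.ex φ)).bsubst θ = _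
    rw [ih θ (.ex φ)]
    rfl

theorem extendBs_castAdd {m k₀ : ℕ} (ι : Fin m → Tm F far) :
    ∀ (k : ℕ) (i : Fin m),
      extendBs (k₀ := k₀) k (fun j => (ι j).toTmc) (Fin.castAdd k i) = (ι i).toTmc := by
  intro k
  induction k with
  | zero => intro i; exact congrArg _ (Fin.ext rfl)
  | succ k ih =>
    intro i
    have h : Fin.castAdd (k + 1) i = (Fin.castAdd k i).castSucc := Fin.ext rfl
    rw [h]
    show extendB _ _ = _
    rw [extendB, Fin.snoc_castSucc, ih i, Tm.toTmc_shift]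

theorem extendBs_natAdd {m k₀ : ℕ} (θ : Fin m → Tmc F far k₀) :
    ∀ (k : ℕ) (j : Fin k),
      extendBs k θ (Fin.natAdd m j) = Tmc.bvar (Fin.natAdd k₀ j) := by
  intro k
  induction k with
  | zero => intro j; exact j.elim0
  | succ k ih =>
    intro j
    refine Fin.lastCases ?_ (fun j' => ?_) j
    · have h : Fin.natAdd m (Fin.last k) = Fin.last (m + k) := Fin.ext rfl
      have h2 : Fin.natAdd k₀ (Fin.last k) = Fin.last (k₀ + k) := Fin.ext rfl
      rw [h, h2]
      show extendB _ _ = _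
      unfold extendB
      exact Fin.snoc_last _ _
    · have h : Fin.natAdd m j'.castSucc = (Fin.natAdd m j').castSucc := Fin.ext rfl
      have h2 : Fin.natAdd k₀ j'.castSucc = (Fin.natAdd k₀ j').castSucc := Fin.ext rfl
      rw [h, h2]
      show extendB _ _ = _
      rw [extendB, Fin.snoc_castSucc, ih j']
      rfl

/- ## Free variables of sentence-level constructions -/

theorem Fml.fv_alls : ∀ (m : ℕ) (φ : Fml F far R rar m), (Fml.alls m φ).fv = φ.fv := by
  intro m
  induction m with
  | zero => intro φ; rfl
  | succ m ih => intro φ; exact ih (.all φ)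

theorem Fml.fv_exs {m : ℕ} : ∀ (k : ℕ) (φ : Fml F far R rar (m + k)),
    (Fml.exs k φ).fv = φ.fv := by
  intro k
  induction k with
  | zero => intro φ; rfl
  | succ k ih => intro φ; exact ih (.ex φ)

theorem fv_listConj_noFvar : ∀ {n : ℕ} (l : List (CAtom F far R rar n)),
    (∀ a ∈ l, ∀ i, (a.2 i).noFvar) → (listConj l).fv = ∅ := by
  intro n l
  induction l with
  | nil => intro _; rfl
  | cons a l ih =>
    intro h
    show Fml.fv (.conj (.atom a.1 a.2) (listConj l)) = ∅
    simp only [Fml.fv]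
    rw [ih fun b hb => h b (List.mem_cons_of_mem a hb)]
    rw [Set.iUnion_eq_empty.mpr fun i => Tmc.fv_noFvar (h a (List.mem_cons_self) i)]
    simp

theorem CohAx.fv_toFml (ax : CohAx F far R rar) : (CohAx.toFml ax).fv = ∅ := by
  unfold CohAx.toFml
  rw [Fml.fv_alls]
  show Fml.fv (listConj ax.hyp) ∪ _ = ∅
  rw [fv_listConj_noFvar ax.hyp ax.hypClosed]
  show (∅ : Set ℕ) ∪ Fml.fv (.disj _ _) = ∅
  simp only [Set.empty_union, Fml.fv]
  refine Set.iUnion_eq_empty.mpr fun i => ?_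
  rw [Fml.fv_exs]
  exact fv_listConj_noFvar _ fun a ha j =>
    ax.conclClosed _ (List.get_mem _ i) a ha j

theorem fv_atomF (a : Atom F far R rar) : (atomF a).fv = Atom.fv a := by
  show (⋃ i, ((a.2 i).toTmc : Tmc F far 0).fv) = _
  exact Set.iUnion_congr fun i => Tm.toTmc_fv (a.2 i)

theorem substFv_atomF (σ : ℕ → Tm F far) (a : Atom F far R rar) :
    (atomF a).substFv σ = atomF (a.subst σ) := by
  show Fml.atom a.1 (fun i => ((a.2 i).toTmc : Tmc F far 0).substFv σ) = _
  unfold atomF Atom.subst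
  congr 1
  funext i
  exact Tm.toTmc_substFv σ (a.2 i)

theorem Fml.substFv_of_fv_empty {n : ℕ} {φ : Fml F far R rar n} (h : φ.fv = ∅)
    (σ : ℕ → Tm F far) : φ.substFv σ = φ := by
  rw [Fml.substFv_congr (σ' := Tm.fvar) (by rw [h]; intro x hx; exact absurd hx (Set.notMem_empty x)),
    Fml.substFv_id]

/- ## The ambient theory of a condition -/

/-- The context of hypotheses associated to a theory `T` and condition `C`. -/
def Thy (T : Set (CohAx F far R rar)) (C : Cond F far R rar) : Set (Fml F far R rar 0) :=
  CohAx.toFml '' T ∪ atomF '' C.A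

theorem Thy_fv {T : Set (CohAx F far R rar)} {C : Cond F far R rar} :
    ∀ χ ∈ Thy T C, Fml.fv χ ⊆ ↑C.X := by
  rintro χ (⟨ax, _, rfl⟩ | ⟨a, ha, rfl⟩)
  · rw [CohAx.fv_toFml]; exact Set.empty_subset _
  · rw [fv_atomF]; exact C.wf a ha

/- ## Structural lemmas for provability -/

theorem Prv_union {em : Prop} {X : Finset ℕ} {Γ : Set (Fml F far R rar 0)}
    {φ : Fml F far R rar 0} (h : Prv em X Γ φ) :
    ∀ (Δ : Set (Fml F far R rar 0)), (∀ ψ ∈ Δ, Fml.fv ψ ⊆ ↑X) → Prv em X (Γ ∪ Δ) φ := by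
  induction h with
  | ax h => exact fun Δ _ => Prv.ax (Or.inl h)
  | topI => exact fun _ _ => Prv.topI
  | botE _ ih => exact fun Δ hΔ => Prv.botE (ih Δ hΔ)
  | conjI _ _ ih1 ih2 => exact fun Δ hΔ => Prv.conjI (ih1 Δ hΔ) (ih2 Δ hΔ)
  | conjE1 _ ih => exact fun Δ hΔ => Prv.conjE1 (ih Δ hΔ)
  | conjE2 _ ih => exact fun Δ hΔ => Prv.conjE2 (ih Δ hΔ)
  | disjI i _ ih => exact fun Δ hΔ => Prv.disjI i (ih Δ hΔ)
  | disjE _ _ ih ihs =>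
    intro Δ hΔ
    exact Prv.disjE (ih Δ hΔ) fun i => Set.insert_union .. ▸ ihs i Δ hΔ
  | impI _ ih => exact fun Δ hΔ => Prv.impI (Set.insert_union .. ▸ ih Δ hΔ)
  | impE _ _ ih1 ih2 => exact fun Δ hΔ => Prv.impE (ih1 Δ hΔ) (ih2 Δ hΔ)
  | @allI X Γ φ x hx hφ hΓ _ ih =>
    intro Δ hΔ
    refine Prv.allI x hx hφ ?_ (ih Δ fun ψ hψ =>
      (hΔ ψ hψ).trans (Finset.coe_subset.mpr (Finset.subset_insert x X)))
    rintro ψ (hψ | hψ)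
    · exact hΓ ψ hψ
    · exact fun hmem => hx (hΔ ψ hψ hmem)
  | allE t ht _ ih => exact fun Δ hΔ => Prv.allE t ht (ih Δ hΔ)
  | exI t ht _ ih => exact fun Δ hΔ => Prv.exI t ht (ih Δ hΔ)
  | @exE X Γ φ ψ x hx hφ hψ hΓ _ _ ih1 ih2 =>
    intro Δ hΔ
    refine Prv.exE x hx hφ hψ ?_ (ih1 Δ hΔ)
      (Set.insert_union .. ▸ ih2 Δ fun χ hχ =>
        (hΔ χ hχ).trans (Finset.coe_subset.mpr (Finset.subset_insert x X)))
    rintro χ (hχ | hχ)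
    · exact hΓ χ hχ
    · exact fun hmem => hx (hΔ χ hχ hmem)
  | em φ h => exact fun _ _ => Prv.em φ h

theorem Prv_mono {em : Prop} {X : Finset ℕ} {Γ Γ' : Set (Fml F far R rar 0)}
    {φ : Fml F far R rar 0} (h : Prv em X Γ φ) (hsub : Γ ⊆ Γ')
    (hfv : ∀ χ ∈ Γ', Fml.fv χ ⊆ ↑X) : Prv em X Γ' φ := by
  have := Prv_union h Γ' hfv
  rwa [Set.union_eq_right.mpr hsub] at this

theorem Prv_cut {em : Prop} {X : Finset ℕ} {Γ : Set (Fml F far R rar 0)}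
    {χ ψ : Fml F far R rar 0} (h1 : Prv em X (insert χ Γ) ψ) (h2 : Prv em X Γ χ) :
    Prv em X Γ ψ :=
  Prv.impE (Prv.impI h1) h2

theorem Prv_cut_list {em : Prop} : ∀ (l : List (Fml F far R rar 0)) {X : Finset ℕ}
    {Γ : Set (Fml F far R rar 0)} {ψ : Fml F far R rar 0},
    Prv em X (Γ ∪ {χ | χ ∈ l}) ψ → (∀ χ ∈ l, Prv em X Γ χ) →
    (∀ χ ∈ Γ, Fml.fv χ ⊆ ↑X) → (∀ χ ∈ l, Fml.fv χ ⊆ ↑X) → Prv em X Γ ψ := by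
  intro l
  induction l with
  | nil =>
    intro X Γ ψ h _ _ _
    rwa [show {χ : Fml F far R rar 0 | χ ∈ ([] : List _)} = ∅ by ext χ; simp,
      Set.union_empty] at h
  | cons a l ih =>
    intro X Γ ψ h hprv hΓ hl
    have hset : Γ ∪ {χ | χ ∈ a :: l} = insert a (Γ ∪ {χ | χ ∈ l}) := by
      ext χ; simp [List.mem_cons]; tauto
    rw [hset] at h
    have ha : Prv em X (Γ ∪ {χ | χ ∈ l}) a := by
      refine Prv_mono (hprv a (List.mem_cons_self)) Set.subset_union_left ?_
      rintro χ (hχ | hχ)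
      · exact hΓ χ hχ
      · exact hl χ (List.mem_cons_of_mem a hχ)
    exact ih (Prv_cut h ha) (fun χ hχ => hprv χ (List.mem_cons_of_mem a hχ)) hΓ
      (fun χ hχ => hl χ (List.mem_cons_of_mem a hχ))
/- ## Extending finite partial injections to permutations of ℕ -/

theorem exists_perm_extend (S : Finset ℕ) (f : ℕ → ℕ) (hf : Set.InjOn f ↑S) :
    ∃ π : Equiv.Perm ℕ, ∀ x ∈ S, π x = f x := by
  classical
  let e1 : ↥(↑S : Set ℕ) ≃ ↥(f '' ↑S) := Equiv.Set.imageOfInjOn f ↑S hf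
  have h1 : ((↑S : Set ℕ)ᶜ).Infinite := Set.Finite.infinite_compl S.finite_toSet
  have h2 : ((f '' ↑S)ᶜ).Infinite :=
    Set.Finite.infinite_compl (S.finite_toSet.image f)
  haveI i1 : Infinite ↥((↑S : Set ℕ)ᶜ) := Set.infinite_coe_iff.mpr h1
  haveI i2 : Infinite ↥((f '' ↑S)ᶜ) := Set.infinite_coe_iff.mpr h2
  haveI d1 : Denumerable ↥((↑S : Set ℕ)ᶜ) := Nat.Subtype.denumerable _
  haveI d2 : Denumerable ↥((f '' ↑S)ᶜ) := Nat.Subtype.denumerable _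
  let e2 : ↥((↑S : Set ℕ)ᶜ) ≃ ↥((f '' ↑S)ᶜ) :=
    (Denumerable.eqv _).trans (Denumerable.eqv _).symm
  refine ⟨((Equiv.Set.sumCompl (↑S : Set ℕ)).symm.trans
    ((e1.sumCongr e2).trans (Equiv.Set.sumCompl (f '' ↑S)))), fun x hx => ?_⟩
  have hx' : x ∈ (↑S : Set ℕ) := hx
  simp only [Equiv.trans_apply]
  rw [Equiv.Set.sumCompl_symm_apply_of_mem hx']
  simp only [Equiv.sumCongr_apply, Sum.map_inl]
  rw [Equiv.Set.sumCompl_apply_inl]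
  simp [e1, Equiv.Set.imageOfInjOn]

/- ## Renaming invariance of provability -/

theorem Prv_perm {em : Prop} {X : Finset ℕ} {Γ : Set (Fml F far R rar 0)}
    {φ : Fml F far R rar 0} (π : Equiv.Perm ℕ) (h : Prv em X Γ φ) :
    Prv em (X.image π) ((Fml.substFv (fun x => Tm.fvar (π x))) '' Γ)
      (φ.substFv (fun x => Tm.fvar (π x))) := by
  classical
  set σ : ℕ → Tm F far := fun x => Tm.fvar (π x) with hσ
  have fvlem : ∀ {n : ℕ} (ψ : Fml F far R rar n) (y : ℕ),
      π y ∈ (ψ.substFv σ).fv → y ∈ ψ.fv := by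
    intro n ψ y hy
    obtain ⟨x, hx, hfv⟩ := Set.mem_iUnion₂.mp (Fml.fv_substFv σ ψ hy)
    have : π y ∈ ({π x} : Set ℕ) := hfv
    rw [Set.mem_singleton_iff] at this
    rwa [π.injective this]
  induction h with
  | ax h => exact Prv.ax (Set.mem_image_of_mem _ h)
  | topI => exact Prv.topI
  | botE _ ih => exact Prv.botE ih
  | conjI _ _ ih1 ih2 => exact Prv.conjI ih1 ih2
  | conjE1 _ ih => exact Prv.conjE1 ih
  | conjE2 _ ih => exact Prv.conjE2 ih
  | disjI i _ ih => exact Prv.disjI i ih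
  | disjE _ _ ih ihs =>
    refine Prv.disjE ih fun i => ?_
    have := ihs i
    rwa [Set.image_insert_eq] at this
  | impI _ ih =>
    refine Prv.impI ?_
    rwa [Set.image_insert_eq] at ih
  | impE _ _ ih1 ih2 => exact Prv.impE ih1 ih2
  | @allI X Γ φ x hx hφ hΓ _ ih =>
    show Prv em _ _ (.all (φ.substFv σ))
    refine Prv.allI (π x) (fun hmem => hx ?_) (fun hmem => hφ (fvlem (.all φ) x hmem))
      ?_ ?_
    · obtain ⟨y, hy, hxy⟩ := Finset.mem_image.mp hmem
      rwa [← π.injective hxy]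
    · rintro ψ ⟨χ, hχ, rfl⟩ hmem
      exact hΓ χ hχ (fvlem χ x hmem)
    · rw [Finset.image_insert] at ih
      have : (Fml.open0 (.fvar x) φ).substFv σ = Fml.open0 (.fvar (π x)) (φ.substFv σ) := by
        rw [Fml.substFv_open0]; rfl
      rwa [this] at ih
  | @allE X Γ φ t ht _ ih =>
    have heq : (Fml.open0 t φ).substFv σ = Fml.open0 (t.subst σ) (φ.substFv σ) :=
      Fml.substFv_open0 σ t φ
    rw [heq]
    refine Prv.allE (t.subst σ) ?_ ih
    intro y hy
    obtain ⟨x, hx, hfv⟩ := Set.mem_iUnion₂.mp (Tm.fv_subst σ t hy)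
    have : y ∈ ({π x} : Set ℕ) := hfv
    rw [Set.mem_singleton_iff] at this
    subst this
    exact Finset.mem_coe.mpr (Finset.mem_image_of_mem π (Finset.mem_coe.mp (ht hx)))
  | @exI X Γ φ t ht _ ih =>
    refine Prv.exI (t.subst σ) ?_ ?_
    · intro y hy
      obtain ⟨x, hx, hfv⟩ := Set.mem_iUnion₂.mp (Tm.fv_subst σ t hy)
      have : y ∈ ({π x} : Set ℕ) := hfv
      rw [Set.mem_singleton_iff] at this
      subst this
      exact Finset.mem_coe.mpr (Finset.mem_image_of_mem π (Finset.mem_coe.mp (ht hx)))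
    · have heq : (Fml.open0 t φ).substFv σ = Fml.open0 (t.subst σ) (φ.substFv σ) :=
        Fml.substFv_open0 σ t φ
      rwa [heq] at ih
  | @exE X Γ φ ψ x hx hφ hψ hΓ _ _ ih1 ih2 =>
    refine Prv.exE (π x) (fun hmem => hx ?_) (fun hmem => hφ (fvlem (.ex φ) x hmem))
      (fun hmem => hψ (fvlem ψ x hmem)) ?_ ih1 ?_
    · obtain ⟨y, hy, hxy⟩ := Finset.mem_image.mp hmem
      rwa [← π.injective hxy]
    · rintro χ ⟨χ', hχ', rfl⟩ hmem
      exact hΓ χ' hχ' (fvlem χ' x hmem)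
    · rw [Finset.image_insert, Set.image_insert_eq] at ih2
      have : (Fml.open0 (.fvar x) φ).substFv σ = Fml.open0 (.fvar (π x)) (φ.substFv σ) := by
        rw [Fml.substFv_open0]; rfl
      rwa [this] at ih2
  | em φ h =>
    have : (Fml.substFv σ (.disj Bool fun b => bif b then φ else φ.neg)) =
        .disj Bool fun b => bif b then φ.substFv σ else (φ.substFv σ).neg := by
      show Fml.disj Bool _ = _
      congr 1
      funext b
      cases b <;> rfl
    rw [this]
    exact Prv.em _ h
/- ## Morphism helpers -/

theorem Mor.of_le {mc : MC} {D C : Cond F far R rar} (hX : C.X ⊆ D.X) (hA : C.A ⊆ D.A) :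
    Mor mc D C Tm.fvar := by
  refine ⟨?_, ?_, ?_⟩
  · intro x hx y hy
    have : y = x := hy
    subst this
    exact Finset.mem_coe.mpr (hX hx)
  · intro a ha
    rw [Atom.subst_id]
    exact hA ha
  · cases mc
    · exact ⟨fun x _ => ⟨x, rfl⟩, fun a _ b _ h => by injection h⟩
    · exact fun x _ => ⟨x, rfl⟩
    · trivial

theorem IsIsoMor_id (C : Cond F far R rar) : IsIsoMor C C Tm.fvar :=
  ⟨Mor.of_le le_rfl le_rfl, Tm.fvar, Mor.of_le le_rfl le_rfl,
    fun _ _ => rfl, fun _ _ => rfl⟩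

theorem Cond.extend_X_le (C : Cond F far R rar) {m k : ℕ} (ι : Fin m → Tm F far)
    (hι : ∀ i, (ι i).fv ⊆ ↑C.X) (ats : List (CAtom F far R rar (m + k)))
    (hats : ∀ a ∈ ats, ∀ i, (a.2 i).noFvar) :
    C.X ⊆ (C.extend ι hι ats hats).X := by
  intro x hx
  exact Finset.mem_union_left _ hx

theorem Cond.extend_A_le (C : Cond F far R rar) {m k : ℕ} (ι : Fin m → Tm F far)
    (hι : ∀ i, (ι i).fv ⊆ ↑C.X) (ats : List (CAtom F far R rar (m + k)))
    (hats : ∀ a ∈ ats, ∀ i, (a.2 i).noFvar) :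
    C.A ⊆ (C.extend ι hι ats hats).A :=
  Set.subset_union_left

theorem Cov_mor {T : Set (CohAx F far R rar)} {C : Cond F far R rar}
    {U : Sink F far R rar} (h : Cov T C U) :
    ∀ p ∈ U, (∀ x ∈ C.X, (p.2 x).fv ⊆ ↑p.1.X) ∧ ∀ a ∈ C.A, Atom.subst p.2 a ∈ p.1.A := by
  induction h with
  | iso h =>
    intro p hp
    rw [Set.mem_singleton_iff] at hp
    subst hp
    exact ⟨h.1.fvsub, h.1.atoms⟩
  | step ax hax ι hι hhyp U hU ih =>
    intro p hp
    obtain ⟨i, hpi⟩ := Set.mem_iUnion.mp hp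
    obtain ⟨h1, h2⟩ := ih i p hpi
    exact ⟨fun x hx => h1 x (Finset.mem_union_left _ hx),
      fun a ha => h2 a (Set.subset_union_left ha)⟩

/- ## listConj lemmas -/

theorem Tmc.bsubst_eval {n : ℕ} (κ : Fin n → Tm F far) (t : Tmc F far n) :
    t.bsubst (fun j => ((κ j).toTmc : Tmc F far 0)) = (t.eval Tm.fvar κ).toTmc := by
  have := Tmc.inst_eq (k := 0) Tm.fvar κ t
  rwa [Tmc.substFv_id] at this

theorem atom_bsubst_inst {mκ : ℕ} (κ : Fin mκ → Tm F far) (a : CAtom F far R rar mκ) :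
    (Fml.atom a.1 fun i => (a.2 i).bsubst (fun j => ((κ j).toTmc : Tmc F far 0)))
      = atomF (CAtom.inst κ a) := by
  unfold atomF CAtom.inst
  congr 1
  funext i
  exact Tmc.bsubst_eval κ (a.2 i)

theorem prv_listConj {em : Prop} {X : Finset ℕ} {Γ : Set (Fml F far R rar 0)} {mκ : ℕ}
    (κtm : Fin mκ → Tmc F far 0) : ∀ (l : List (CAtom F far R rar mκ)),
    (∀ a ∈ l, Prv em X Γ (.atom a.1 fun i => (a.2 i).bsubst κtm)) →
    Prv em X Γ ((listConj l).bsubst κtm) := by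
  intro l
  induction l with
  | nil => exact fun _ => Prv.topI
  | cons a l ih =>
    intro h
    exact Prv.conjI (h a (List.mem_cons_self))
      (ih fun b hb => h b (List.mem_cons_of_mem a hb))

theorem prv_listConj_elim {em : Prop} {X : Finset ℕ} {Γ : Set (Fml F far R rar 0)} {mκ : ℕ}
    (κtm : Fin mκ → Tmc F far 0) : ∀ (l : List (CAtom F far R rar mκ)),
    Prv em X Γ ((listConj l).bsubst κtm) →
    ∀ a ∈ l, Prv em X Γ (.atom a.1 fun i => (a.2 i).bsubst κtm) := by
  intro l
  induction l with
  | nil => intro _ a ha; exact absurd ha List.not_mem_nil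
  | cons b l ih =>
    intro h a ha
    rcases List.mem_cons.mp ha with rfl | ha
    · exact Prv.conjE1 h
    · exact ih (Prv.conjE2 h) a ha

/- ## Iterated universal instantiation -/

theorem Prv_allsE {em : Prop} {X : Finset ℕ} {Γ : Set (Fml F far R rar 0)} :
    ∀ (m : ℕ) (φ : Fml F far R rar m) (ι : Fin m → Tm F far),
    (∀ i, (ι i).fv ⊆ ↑X) → Prv em X Γ (Fml.alls m φ) →
    Prv em X Γ (φ.bsubst fun i => (ι i).toTmc) := by
  intro m
  induction m with
  | zero =>
    intro φ ι _ h
    rwa [show (fun i : Fin 0 => ((ι i).toTmc : Tmc F far 0)) = fun i => Tmc.bvar i from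
      funext fun i => i.elim0, Fml.bsubst_id]
  | succ m ih =>
    intro φ ι hι h
    have h2 := ih (.all φ) (fun i => ι i.castSucc) (fun i => hι _) h
    have h3 := Prv.allE (ι (Fin.last m)) (hι _) h2
    have henv : (fun i => (extendB (fun j => ((ι j.castSucc).toTmc : Tmc F far 0)) i).bsubst
        (fun _ : Fin 1 => ((ι (Fin.last m)).toTmc : Tmc F far 0)))
        = fun i : Fin (m + 1) => (ι i).toTmc := by
      funext i
      refine Fin.lastCases ?_ (fun j => ?_) i
      · rw [extendB, Fin.snoc_last]; rfl
      · rw [extendB, Fin.snoc_castSucc, Tm.toTmc_shift, Tm.toTmc_bsubst]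
    unfold Fml.open0 at h3
    rwa [Fml.bsubst_bsubst, henv] at h3

/- ## Iterated existential elimination -/

theorem Prv_exsE {em : Prop} : ∀ {k : ℕ} (χ : Fml F far R rar (0 + k)) {X : Finset ℕ}
    {Γ : Set (Fml F far R rar 0)} {ψ : Fml F far R rar 0},
    (∀ φ' ∈ Γ, Fml.fv φ' ⊆ ↑X) → Fml.fv ψ ⊆ ↑X → Fml.fv χ ⊆ ↑X →
    Prv em X Γ (Fml.exs k χ) →
    (∀ ys : Fin k → ℕ, (∀ j, ys j ∉ X) → Function.Injective ys →
      Prv em (X ∪ Finset.image ys Finset.univ)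
        (insert (χ.bsubst fun i => Tmc.fvar (ys (Fin.cast (Nat.zero_add k) i))) Γ) ψ) →
    Prv em X Γ ψ := by
  intro k
  induction k with
  | zero =>
    intro χ X Γ ψ hΓ hψ hχ hex hcont
    have h := hcont (fun j => j.elim0) (fun j => j.elim0) (fun a => a.elim0)
    rw [show (Finset.image (fun j : Fin 0 => j.elim0) Finset.univ : Finset ℕ) = ∅ by simp,
      Finset.union_empty] at h
    rw [show (fun i : Fin (0 + 0) => (Tmc.fvar (Fin.elim0 (Fin.cast (Nat.zero_add 0) i)) :
        Tmc F far 0)) = fun i => Tmc.bvar i from funext fun i => (Fin.cast (Nat.zero_add 0) i).elim0,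
      Fml.bsubst_id] at h
    exact Prv_cut h hex
  | succ k ih =>
    intro χ X Γ ψ hΓ hψ hχ hex hcont
    refine ih (.ex χ) hΓ hψ hχ hex ?_
    intro ys hys hinj
    set X' := X ∪ Finset.image ys Finset.univ with hX'
    set θys : Fin (0 + k) → Tmc F far 0 :=
      fun i => Tmc.fvar (ys (Fin.cast (Nat.zero_add k) i)) with hθys
    set Φ : Fml F far R rar 0 := (Fml.ex χ).bsubst θys with hΦ
    -- fresh variable
    set y : ℕ := X'.sup id + 1 with hy
    have hyX' : y ∉ X' := by
      intro hmem
      have := Finset.le_sup (f := id) hmem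
      simp only [id_eq] at this
      omega
    have hXX' : X ⊆ X' := Finset.subset_union_left
    -- fv bounds
    have hfvθ : ∀ i, (θys i).fv ⊆ ↑X' := by
      intro i z hz
      have : z = ys (Fin.cast (Nat.zero_add k) i) := hz
      subst this
      exact Finset.mem_coe.mpr (Finset.mem_union_right _
        (Finset.mem_image_of_mem _ (Finset.mem_univ _)))
    have hfvΦ : Fml.fv Φ ⊆ ↑X' := by
      intro z hz
      rcases Fml.fv_bsubst θys (.ex χ) hz with h | h
      · exact Finset.coe_subset.mpr hXX' (hχ h)
      · obtain ⟨i, hi⟩ := Set.mem_iUnion.mp h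
        exact hfvθ i hi
    have hΓ' : ∀ φ' ∈ insert Φ Γ, Fml.fv φ' ⊆ ↑X' := by
      rintro φ' (rfl | hφ')
      · exact hfvΦ
      · exact (hΓ φ' hφ').trans (Finset.coe_subset.mpr hXX')
    -- the new opened formula
    have key : ∀ i : Fin (0 + (k + 1)),
        (extendB θys i).bsubst (fun _ : Fin 1 => ((Tm.fvar y).toTmc : Tmc F far 0))
          = (Tmc.fvar ((Fin.snoc ys y : Fin (k + 1) → ℕ) (Fin.cast (Nat.zero_add (k + 1)) i)) :
              Tmc F far 0) := by
      intro i
      refine Fin.lastCases (n := 0 + k) ?_ (fun j => ?_) i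
      · have hcast : Fin.cast (Nat.zero_add (k + 1)) (Fin.last (0 + k)) = Fin.last k :=
          Fin.ext (by simp)
        simp only [extendB, Fin.snoc_last, hcast]
        rfl
      · have h1 : Fin.cast (Nat.zero_add (k + 1)) j.castSucc
            = (Fin.cast (Nat.zero_add k) j).castSucc := Fin.ext rfl
        simp only [extendB, Fin.snoc_castSucc, h1]
        rfl
    refine Prv.exE y hyX' ?_ ?_ (fun χ' hχ' hmem => hyX' (hΓ' χ' hχ' hmem))
      (Prv.ax (Set.mem_insert _ _)) ?_
    · intro hmem
      exact hyX' (hfvΦ hmem)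
    · intro hmem
      exact hyX' (hXX' (hψ hmem))
    · -- use the outer continuation with ys' = snoc ys y
      have hys' : ∀ j : Fin (k + 1), (Fin.snoc ys y : Fin (k + 1) → ℕ) j ∉ X := by
        intro j
        refine Fin.lastCases ?_ (fun j' => ?_) j
        · rw [Fin.snoc_last]; exact fun hmem => hyX' (hXX' hmem)
        · rw [Fin.snoc_castSucc]; exact hys j'
      have hyne : ∀ j', y ≠ ys j' := fun j' h =>
        hyX' (h ▸ Finset.mem_union_right _ (Finset.mem_image_of_mem _ (Finset.mem_univ j')))
      have hinj' : Function.Injective (Fin.snoc ys y : Fin (k + 1) → ℕ) := by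
        intro a b hab
        rcases Fin.eq_castSucc_or_eq_last a with ⟨a', rfl⟩ | rfl <;>
          rcases Fin.eq_castSucc_or_eq_last b with ⟨b', rfl⟩ | rfl
        · rw [Fin.snoc_castSucc, Fin.snoc_castSucc] at hab
          exact congrArg _ (hinj hab)
        · rw [Fin.snoc_castSucc, Fin.snoc_last] at hab
          exact absurd hab.symm (hyne a')
        · rw [Fin.snoc_last, Fin.snoc_castSucc] at hab
          exact absurd hab (hyne b')
        · rfl
      have hc := hcont (Fin.snoc ys y) hys' hinj'
      have hXeq : X ∪ Finset.image (Fin.snoc ys y : Fin (k + 1) → ℕ) Finset.univ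
          = insert y X' := by
        ext a
        rw [hX']
        simp only [Finset.mem_union, Finset.mem_image, Finset.mem_univ, true_and,
          Finset.mem_insert]
        constructor
        · rintro (h | ⟨j, rfl⟩)
          · exact Or.inr (Or.inl h)
          · refine Fin.lastCases ?_ (fun j' => ?_) j
            · rw [Fin.snoc_last]; exact Or.inl rfl
            · rw [Fin.snoc_castSucc]; exact Or.inr (Or.inr ⟨j', rfl⟩)
        · rintro (rfl | h | ⟨j', rfl⟩)
          · exact Or.inr ⟨Fin.last k, Fin.snoc_last _ _⟩
          · exact Or.inl h
          · exact Or.inr ⟨j'.castSucc, Fin.snoc_castSucc _ _ _⟩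
      have hfeq : (χ.bsubst fun i => (Tmc.fvar ((Fin.snoc ys y : Fin (k + 1) → ℕ)
            (Fin.cast (Nat.zero_add (k + 1)) i)) : Tmc F far 0))
          = Fml.open0 (Tm.fvar y) (χ.bsubst (extendB θys)) := by
        unfold Fml.open0
        rw [Fml.bsubst_bsubst]
        exact congrArg (fun env => Fml.bsubst env χ) (funext fun i => (key i).symm)
      rw [hXeq, hfeq] at hc
      refine Prv_mono hc (Set.insert_subset_insert (Set.subset_insert _ _)) ?_
      rintro χ' (rfl | rfl | hχ')
      · -- the opened formula
        rw [← hfeq]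
        intro z hz
        rcases Fml.fv_bsubst _ χ hz with h | h
        · exact Finset.mem_coe.mpr (Finset.mem_insert_of_mem (hXX' (hχ h)))
        · obtain ⟨i, hi⟩ := Set.mem_iUnion.mp h
          have : z = (Fin.snoc ys y : Fin (k + 1) → ℕ) (Fin.cast (Nat.zero_add (k + 1)) i) := hi
          subst this
          set j := Fin.cast (Nat.zero_add (k + 1)) i
          refine Fin.lastCases ?_ (fun j' => ?_) j
          · rw [Fin.snoc_last]; exact Finset.mem_coe.mpr (Finset.mem_insert_self _ _)
          · rw [Fin.snoc_castSucc]
            exact Finset.mem_coe.mpr (Finset.mem_insert_of_mem (Finset.mem_union_right _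
              (Finset.mem_image_of_mem _ (Finset.mem_univ j'))))
      · exact hfvΦ.trans (Finset.coe_subset.mpr (Finset.subset_insert _ _))
      · exact (hΓ χ' hχ').trans (Finset.coe_subset.mpr
          ((hXX'.trans (Finset.subset_insert _ _))))
/- ## Local character of provability -/

/-- The variable of a term (defaulting to 0). -/
def vOf : Tm F far → ℕ
  | .fvar y => y
  | .app _ _ => 0

theorem freshVar_not_mem (C : Cond F far R rar) (j : ℕ) : freshVar C j ∉ C.X := by
  intro hmem
  have := Finset.le_sup (f := id) hmem
  simp only [id_eq] at this
  unfold freshVar at *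
  omega

theorem freshVar_inj (C : Cond F far R rar) : Function.Injective (freshVar C) := by
  intro a b h
  unfold freshVar at h
  omega

theorem local_char {T : Set (CohAx F far R rar)} {C : Cond F far R rar}
    {U : Sink F far R rar} (hcov : Cov T C U) :
    ∀ ψ : Fml F far R rar 0, Fml.fv ψ ⊆ ↑C.X →
      (∀ p ∈ U, Prv False p.1.X (Thy T p.1) (ψ.substFv p.2)) →
      Prv False C.X (Thy T C) ψ := by
  induction hcov with
  | @iso C D σ h =>
    intro ψ hψ hp
    obtain ⟨hm, τ, hmτ, hστ, hτσ⟩ := h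
    have hprv := hp (D, σ) rfl
    have hσf : ∀ x ∈ C.X, σ x = Tm.fvar (vOf (σ x)) := by
      intro x hx
      obtain ⟨y, hy⟩ := hm.cls.1 x hx
      rw [hy]; rfl
    have hinj : Set.InjOn (fun x => vOf (σ x)) ↑C.X := by
      intro a ha b hb hab
      have h1 : σ a = σ b := by
        rw [hσf a ha, hσf b hb]
        exact congrArg _ hab
      have h2 : (Tm.fvar a : Tm F far) = Tm.fvar b := by
        rw [← hστ a ha, h1, hστ b hb]
      injection h2
    obtain ⟨π, hπ⟩ := exists_perm_extend C.X (fun x => vOf (F := F) (far := far) (σ x)) hinj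
    have hσπ : ∀ x ∈ C.X, σ x = Tm.fvar (π x) := fun x hx => by
      rw [hπ x hx]; exact hσf x hx
    have himg : C.X.image π = D.X := by
      apply Finset.Subset.antisymm
      · intro y hy
        obtain ⟨x, hx, rfl⟩ := Finset.mem_image.mp hy
        have hfv := hm.fvsub x hx
        rw [hσπ x hx] at hfv
        exact hfv rfl
      · intro y hy
        obtain ⟨y', hy'⟩ := hmτ.cls.1 y hy
        have hy'X : y' ∈ C.X := by
          have := hmτ.fvsub y hy
          rw [hy'] at this
          exact this rfl
        have h0 : σ y' = Tm.fvar y := by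
          have h1 := hτσ y hy
          rw [hy'] at h1
          exact h1
        rw [hσπ y' hy'X] at h0
        injection h0 with h0
        exact Finset.mem_image.mpr ⟨y', hy'X, h0⟩
    have hp2 := Prv_perm π.symm hprv
    have himg2 : D.X.image π.symm = C.X := by
      rw [← himg, Finset.image_image]
      have : (⇑π.symm ∘ ⇑π) = id := funext fun x => π.symm_apply_apply x
      rw [this, Finset.image_id]
    rw [himg2] at hp2
    have hform : (ψ.substFv σ).substFv (fun x => Tm.fvar (π.symm x)) = ψ := by
      rw [Fml.substFv_substFv]
      have hagree : ∀ x ∈ ψ.fv, (σ x).subst (fun z => Tm.fvar (π.symm z)) = Tm.fvar x := by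
        intro x hx
        rw [hσπ x (hψ hx)]
        show Tm.fvar (π.symm (π x)) = _
        rw [π.symm_apply_apply]
      exact (Fml.substFv_congr hagree).trans (Fml.substFv_id ψ)
    rw [hform] at hp2
    refine Prv_mono hp2 ?_ (fun χ hχ => Thy_fv χ hχ)
    rintro χ' ⟨χ, hχ, rfl⟩
    rcases hχ with ⟨ax, hax, rfl⟩ | ⟨a, ha, rfl⟩
    · exact Or.inl ⟨ax, hax, (Fml.substFv_of_fv_empty (CohAx.fv_toFml ax) _).symm⟩
    · refine Or.inr ⟨a.subst τ, hmτ.atoms a ha, ?_⟩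
      rw [substFv_atomF]
      congr 1
      refine (Atom.subst_congr ?_).symm
      intro y hyfv
      have hyD : y ∈ D.X := D.wf a ha hyfv
      obtain ⟨y', hy'⟩ := hmτ.cls.1 y hyD
      have hy'X : y' ∈ C.X := by
        have := hmτ.fvsub y hyD
        rw [hy'] at this
        exact this rfl
      have h0 : σ y' = Tm.fvar y := by
        have h1 := hτσ y hyD
        rw [hy'] at h1
        exact h1
      rw [hσπ y' hy'X] at h0
      injection h0 with h0
      rw [hy', ← h0, π.symm_apply_apply]
  | @step C ax hax ι hι hhyp U hU ih =>
    intro ψ hψ hp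
    classical
    set θι : Fin ax.m → Tmc F far 0 := fun i => (ι i).toTmc with hθι
    have hax0 : Prv False C.X (Thy T C) (CohAx.toFml ax) :=
      Prv.ax (Set.subset_union_left (Set.mem_image_of_mem _ hax))
    have h1 := Prv_allsE ax.m _ ι hι hax0
    have h2 : Prv False C.X (Thy T C) ((listConj ax.hyp).bsubst θι) := by
      refine prv_listConj θι ax.hyp fun a ha => ?_
      rw [hθι, atom_bsubst_inst]
      exact Prv.ax (Set.subset_union_right (Set.mem_image_of_mem _ (hhyp a ha)))
    have h3 := Prv.impE h1 h2
    refine Prv.disjE h3 fun i => ?_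
    -- branch i
    set k : ℕ := (ax.concl.get i).1 with hk
    set ats : List (CAtom F far R rar (ax.m + k)) := (ax.concl.get i).2 with hats
    have hclosed : ∀ a ∈ ats, ∀ j, (a.2 j).noFvar :=
      fun a ha j => ax.conclClosed _ (List.get_mem _ i) a ha j
    set Ci : Cond F far R rar := C.extend ι hι ats hclosed with hCi
    set χi : Fml F far R rar (0 + k) := (listConj ats).bsubst (extendBs k θι) with hχi
    have hexs : (Fml.exs k (listConj ats)).bsubst θι = Fml.exs k χi :=
      Fml.exs_bsubst k θι (listConj ats)
    show Prv False C.X (insert ((Fml.exs k (listConj ats)).bsubst θι) (Thy T C)) ψ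
    rw [hexs]
    -- the IH at this branch, with condition Ci (whose extension is exactly the branch data)
    have Bi : Prv False Ci.X (Thy T Ci) ψ := by
      refine ih i ψ (hψ.trans (Finset.coe_subset.mpr (C.extend_X_le ι hι ats hclosed))) ?_
      intro p hp'
      exact hp p (Set.mem_iUnion.mpr ⟨i, hp'⟩)
    -- bounds on extendBs entries
    have hθfv : ∀ (j : Fin (ax.m + k)), (extendBs k θι j).fv ⊆ ↑C.X := by
      intro j
      refine Fin.addCases (fun i0 => ?_) (fun j0 => ?_) j
      · rw [hθι, extendBs_castAdd, Tm.toTmc_fv]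
        exact hι i0
      · rw [extendBs_natAdd]
        exact fun z hz => absurd hz (Set.notMem_empty z)
    have hLCfv : Fml.fv (listConj ats) = ∅ := fv_listConj_noFvar ats hclosed
    have hχfv : Fml.fv χi ⊆ ↑C.X := by
      intro z hz
      rcases Fml.fv_bsubst _ _ hz with h | h
      · rw [hLCfv] at h
        exact absurd h (Set.notMem_empty z)
      · obtain ⟨j, hj⟩ := Set.mem_iUnion.mp h
        exact hθfv j hj
    -- eliminate the iterated existential
    refine Prv_exsE χi ?_ hψ hχfv (Prv.ax (Set.mem_insert _ _)) ?_
    · rintro φ' (rfl | hφ')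
      · rw [Fml.fv_exs]
        exact hχfv
      · exact Thy_fv φ' hφ'
    · intro ys hys hinj
      set X' : Finset ℕ := C.X ∪ Finset.image ys Finset.univ with hX'
      set κ : Fin (ax.m + k) → Tm F far :=
        Fin.append ι (fun j => Tm.fvar (ys j)) with hκ
      set κtm : Fin (ax.m + k) → Tmc F far 0 := fun j => (κ j).toTmc with hκtm
      set θys : Fin (0 + k) → Tmc F far 0 :=
        fun i0 => Tmc.fvar (ys (Fin.cast (Nat.zero_add k) i0)) with hθys
      -- (a) the inserted formula is the κ-instantiated conjunction
      have hconj : χi.bsubst θys = (listConj ats).bsubst κtm := by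
        rw [hχi, Fml.bsubst_bsubst]
        refine congrArg (fun env => Fml.bsubst env (listConj ats)) (funext fun j => ?_)
        refine Fin.addCases (fun i0 => ?_) (fun j0 => ?_) j
        · simp only [hθι, hκtm, hκ]
          rw [extendBs_castAdd, Tm.toTmc_bsubst, Fin.append_left]
        · rw [extendBs_natAdd]
          simp only [Tmc.bsubst, hθys, hκtm, hκ]
          rw [Fin.append_right]
          have hcast : Fin.cast (Nat.zero_add k) (Fin.natAdd 0 j0) = j0 := Fin.ext (by simp)
          rw [hcast]
          rfl
      -- (b) a permutation sending the fresh variables to ys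
      set f : ℕ → ℕ := fun x =>
        if h : ∃ j : Fin k, freshVar C j = x then ys h.choose else x with hf
      have hfC : ∀ x ∈ C.X, f x = x := by
        intro x hx
        simp only [hf]
        refine dif_neg ?_
        rintro ⟨j, rfl⟩
        exact freshVar_not_mem C j hx
      have hffresh : ∀ j : Fin k, f (freshVar C j) = ys j := by
        intro j
        simp only [hf]
        have hex : ∃ j' : Fin k, freshVar C (j' : ℕ) = freshVar C (j : ℕ) := ⟨j, rfl⟩
        rw [dif_pos hex]
        have hval : ((hex.choose : Fin k) : ℕ) = (j : ℕ) := freshVar_inj C hex.choose_spec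
        have hj : hex.choose = j := Fin.ext hval
        rw [hj]
      have hinjOn : Set.InjOn f ↑Ci.X := by
        intro a ha b hb hab
        have hmemCi : ∀ c, c ∈ Ci.X → (∃ j : Fin k, freshVar C j = c) ∨ c ∈ C.X := by
          intro c hc
          rcases Finset.mem_union.mp hc with hc | hc
          · exact Or.inr hc
          · obtain ⟨j, _, hj⟩ := Finset.mem_image.mp hc
            exact Or.inl ⟨j, hj⟩
        rcases hmemCi a ha with ⟨ja, rfl⟩ | haC <;> rcases hmemCi b hb with ⟨jb, rfl⟩ | hbC
        · rw [hffresh ja, hffresh jb] at hab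
          exact congrArg (fun (j : Fin k) => freshVar C (j : ℕ)) (hinj hab)
        · rw [hffresh ja, hfC b hbC] at hab
          exact absurd (hab ▸ hbC) (hys ja)
        · rw [hfC a haC, hffresh jb] at hab
          exact absurd (hab ▸ haC) (hys jb)
        · rwa [hfC a haC, hfC b hbC] at hab
      obtain ⟨π, hπf⟩ := exists_perm_extend Ci.X f hinjOn
      have hπC : ∀ x ∈ C.X, π x = x := fun x hx =>
        (hπf x (C.extend_X_le ι hι ats hclosed hx)).trans (hfC x hx)
      have hπfresh : ∀ j : Fin k, π (freshVar C j) = ys j := by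
        intro j
        have hmem : freshVar C j ∈ Ci.X :=
          Finset.mem_union_right _ (Finset.mem_image_of_mem _ (Finset.mem_univ j))
        exact (hπf _ hmem).trans (hffresh j)
      set σπ : ℕ → Tm F far := fun x => Tm.fvar (π x) with hσπ
      have hp3 := Prv_perm π Bi
      -- the formula is fixed
      have hfix : ψ.substFv σπ = ψ := by
        refine (Fml.substFv_congr (σ' := Tm.fvar) ?_).trans (Fml.substFv_id ψ)
        intro x hx
        rw [hσπ]
        exact congrArg _ (hπC x (hψ hx))
      rw [hfix] at hp3
      -- the variables
      have himgX : Ci.X.image π = X' := by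
        apply Finset.Subset.antisymm
        · intro a ha
          obtain ⟨x, hx, rfl⟩ := Finset.mem_image.mp ha
          rcases Finset.mem_union.mp hx with hx | hx
          · rw [hπC x hx]
            exact Finset.mem_union_left _ hx
          · obtain ⟨j, _, rfl⟩ := Finset.mem_image.mp hx
            rw [hπfresh j]
            exact Finset.mem_union_right _ (Finset.mem_image_of_mem _ (Finset.mem_univ j))
        · intro a ha
          rcases Finset.mem_union.mp ha with ha | ha
          · exact Finset.mem_image.mpr ⟨a, C.extend_X_le ι hι ats hclosed ha, hπC a ha⟩
          · obtain ⟨j, _, rfl⟩ := Finset.mem_image.mp ha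
            refine Finset.mem_image.mpr ⟨freshVar C j, ?_, hπfresh j⟩
            exact Finset.mem_union_right _ (Finset.mem_image_of_mem _ (Finset.mem_univ j))
      rw [himgX] at hp3
      -- the context embeds
      set Lst : List (Fml F far R rar 0) := ats.map (fun b => atomF (CAtom.inst κ b)) with hLst
      have hctx : Fml.substFv σπ '' Thy T Ci ⊆ Thy T C ∪ {χ' | χ' ∈ Lst} := by
        rintro χ' ⟨χ, hχ, rfl⟩
        rcases hχ with ⟨ax', hax', rfl⟩ | ⟨a, ha, rfl⟩
        · exact Or.inl (Or.inl ⟨ax', hax',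
            (Fml.substFv_of_fv_empty (CohAx.fv_toFml ax') _).symm⟩)
        · rcases ha with ha | ⟨b, hb, rfl⟩
          · refine Or.inl (Or.inr ⟨a, ha, ?_⟩)
            rw [substFv_atomF]
            congr 1
            refine (Atom.subst_congr (σ' := Tm.fvar) ?_).trans (Atom.subst_id a) |>.symm
            intro y hyfv
            rw [hσπ]
            exact congrArg _ (hπC y (C.wf a ha hyfv))
          · refine Or.inr ?_
            show Fml.substFv σπ (atomF _) ∈ {χ' | χ' ∈ Lst}
            rw [substFv_atomF]
            have heq : Atom.subst σπ (CAtom.inst (Fin.append ι fun j : Fin k =>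
                Tm.fvar (freshVar C j)) b) = CAtom.inst κ b := by
              unfold Atom.subst CAtom.inst
              refine congrArg (fun g => (⟨b.1, g⟩ : Atom F far R rar)) (funext fun i0 => ?_)
              rw [Tmc.eval_subst σπ _ (hclosed b hb i0)]
              refine congrArg (fun κ' => Tmc.eval Tm.fvar κ' (b.2 i0)) (funext fun j => ?_)
              refine Fin.addCases (fun ja => ?_) (fun jb => ?_) j
              · simp only [hκ]
                rw [Fin.append_left, Fin.append_left]
                refine (Tm.subst_congr (σ' := Tm.fvar) ?_).trans (Tm.subst_id _)
                intro y hyfv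
                simp only [hσπ]
                exact congrArg _ (hπC y (hι ja hyfv))
              · simp only [hκ]
                rw [Fin.append_right, Fin.append_right]
                show σπ (freshVar C (jb : ℕ)) = _
                simp only [hσπ]
                exact congrArg _ (hπfresh jb)
            rw [heq]
            exact List.mem_map.mpr ⟨b, hb, rfl⟩
      -- assemble the final context
      set conjF : Fml F far R rar 0 := (listConj ats).bsubst κtm with hconjF
      set exsF : Fml F far R rar 0 := Fml.exs k χi with hexsF
      set Γ0 : Set (Fml F far R rar 0) := insert conjF (insert exsF (Thy T C)) with hΓ0
      have hκfv : ∀ j, (κ j).fv ⊆ ↑X' := by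
        intro j
        refine Fin.addCases (fun ja => ?_) (fun jb => ?_) j
        · rw [hκ, Fin.append_left]
          exact (hι ja).trans (Finset.coe_subset.mpr Finset.subset_union_left)
        · rw [hκ, Fin.append_right]
          intro z hz
          have : z = ys jb := hz
          subst this
          exact Finset.mem_union_right _ (Finset.mem_image_of_mem _ (Finset.mem_univ _))
      have hconjFfv : Fml.fv conjF ⊆ ↑X' := by
        intro z hz
        rcases Fml.fv_bsubst _ _ hz with h | h
        · rw [hLCfv] at h
          exact absurd h (Set.notMem_empty z)
        · obtain ⟨j, hj⟩ := Set.mem_iUnion.mp h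
          rw [hκtm, Tm.toTmc_fv] at hj
          exact hκfv j hj
      have hLstfv : ∀ χ' ∈ {χ' | χ' ∈ Lst}, Fml.fv χ' ⊆ ↑X' := by
        intro χ' hχ'
        obtain ⟨b, hb, rfl⟩ := List.mem_map.mp hχ'
        rw [fv_atomF]
        intro z hz
        obtain ⟨i0, hi0⟩ := Set.mem_iUnion.mp hz
        obtain ⟨j, hj⟩ := Set.mem_iUnion.mp (Tm.fv_eval κ (b.2 i0) (hclosed b hb i0) hi0)
        exact hκfv j hj
      have hΓ0fv : ∀ χ' ∈ Γ0, Fml.fv χ' ⊆ ↑X' := by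
        rintro χ' (rfl | rfl | h)
        · exact hconjFfv
        · rw [hexsF, Fml.fv_exs]
          exact hχfv.trans (Finset.coe_subset.mpr Finset.subset_union_left)
        · exact (Thy_fv χ' h).trans (Finset.coe_subset.mpr Finset.subset_union_left)
      have hp4 : Prv False X' (Γ0 ∪ {χ' | χ' ∈ Lst}) ψ := by
        refine Prv_mono hp3 ?_ ?_
        · intro e he
          rcases hctx he with h | h
          · exact Or.inl (Set.mem_insert_of_mem _ (Set.mem_insert_of_mem _ h))
          · exact Or.inr h
        · rintro χ' (h | h)
          · exact hΓ0fv χ' h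
          · exact hLstfv χ' h
      have hprvLst : ∀ χ' ∈ Lst, Prv False X' Γ0 χ' := by
        intro χ' hχ'
        obtain ⟨b, hb, rfl⟩ := List.mem_map.mp hχ'
        have hconjprv : Prv False X' Γ0 ((listConj ats).bsubst κtm) :=
          Prv.ax (Set.mem_insert _ _)
        have := prv_listConj_elim κtm ats hconjprv b hb
        rwa [hκtm, atom_bsubst_inst] at this
      have hfinal := Prv_cut_list Lst hp4 hprvLst hΓ0fv
        (fun χ' hχ' => hLstfv χ' hχ')
      rw [hconj]
      exact hfinal
/- ## Instantiation lemmas for the main induction -/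

theorem fv_inst {n : ℕ} (σ : ℕ → Tm F far) (ρ : Fin n → Tm F far) (φ : Fml F far R rar n)
    {X : Finset ℕ} (hσ : ∀ y ∈ φ.fv, (σ y).fv ⊆ ↑X) (hρ : ∀ i, (ρ i).fv ⊆ ↑X) :
    Fml.fv ((φ.substFv σ).bsubst (fun i => ((ρ i).toTmc : Tmc F far 0))) ⊆ ↑X := by
  intro z hz
  rcases Fml.fv_bsubst _ _ hz with h | h
  · obtain ⟨x, hx, hfv⟩ := Set.mem_iUnion₂.mp (Fml.fv_substFv σ φ h)
    exact hσ x hx hfv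
  · obtain ⟨i, hi⟩ := Set.mem_iUnion.mp h
    rw [Tm.toTmc_fv] at hi
    exact hρ i hi

theorem inst_substFv {n : ℕ} (σ τ : ℕ → Tm F far) (ρ : Fin n → Tm F far)
    (φ : Fml F far R rar n) :
    (((φ.substFv σ).bsubst (fun i => ((ρ i).toTmc : Tmc F far 0))).substFv τ)
      = (φ.substFv fun y => (σ y).subst τ).bsubst
          (fun i => (((ρ i).subst τ).toTmc : Tmc F far 0)) := by
  rw [Fml.substFv_bsubst, Fml.substFv_substFv]
  exact congrArg (fun env => Fml.bsubst env _) (funext fun i => Tm.toTmc_substFv τ (ρ i))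

theorem atom_inst_eq {n : ℕ} (σ : ℕ → Tm F far) (ρ : Fin n → Tm F far) (r : R)
    (ts : Fin (rar r) → Tmc F far n) :
    ((Fml.atom r ts : Fml F far R rar n).substFv σ).bsubst
        (fun i => ((ρ i).toTmc : Tmc F far 0))
      = atomF ⟨r, fun i => (ts i).eval σ ρ⟩ := by
  show Fml.atom r _ = _
  unfold atomF
  congr 1
  funext i
  exact Tmc.inst_eq σ ρ (ts i)

theorem open0_inst {n : ℕ} (σ : ℕ → Tm F far) (ρ : Fin n → Tm F far) (t : Tm F far)
    (φ : Fml F far R rar (n + 1)) :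
    Fml.open0 t ((φ.substFv σ).bsubst (extendB (fun i => ((ρ i).toTmc : Tmc F far 0))))
      = (φ.substFv σ).bsubst
          (fun i => ((((Fin.snoc ρ t : Fin (n + 1) → Tm F far)) i).toTmc : Tmc F far 0)) := by
  unfold Fml.open0
  rw [Fml.bsubst_bsubst]
  refine congrArg (fun env => Fml.bsubst env _) (funext fun i => ?_)
  refine Fin.lastCases ?_ (fun j => ?_) i
  · simp only [extendB, Fin.snoc_last, Tmc.bsubst]
  · simp only [extendB, Fin.snoc_castSucc]
    rw [Tm.toTmc_shift, Tm.toTmc_bsubst]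

/- ## The main induction -/

theorem main_forcing {mc : MC} {T : Set (CohAx F far R rar)} : ∀ {n : ℕ}
    {φ : Fml F far R rar n}, GGI φ →
    ∀ (C : Cond F far R rar) (σ : ℕ → Tm F far) (ρ : Fin n → Tm F far),
    (∀ y ∈ φ.fv, (σ y).fv ⊆ ↑C.X) → (∀ i, (ρ i).fv ⊆ ↑C.X) →
    Forces mc (Cov T) C σ ρ φ →
    Prv False C.X (Thy T C) ((φ.substFv σ).bsubst
      (fun i => ((ρ i).toTmc : Tmc F far 0))) := by
  intro n φ hG
  induction hG with
  | @atom n r ts =>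
    intro C σ ρ hσ hρ hforce
    obtain ⟨U, hcovU, hfacts⟩ := hforce
    rw [atom_inst_eq]
    refine local_char hcovU _ ?_ ?_
    · rw [fv_atomF]
      intro z hz
      obtain ⟨i, hi⟩ := Set.mem_iUnion.mp hz
      rcases Tmc.fv_eval σ ρ (ts i) hi with h | h
      · obtain ⟨x, hx, hfv⟩ := Set.mem_iUnion₂.mp h
        exact hσ x (Set.mem_iUnion.mpr ⟨i, hx⟩) hfv
      · obtain ⟨i0, hi0⟩ := Set.mem_iUnion.mp h
        exact hρ i0 hi0
    · intro p hpU
      rw [substFv_atomF]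
      exact Prv.ax (Set.subset_union_right (Set.mem_image_of_mem _ (hfacts p hpU)))
  | @top n =>
    intro C σ ρ _ _ _
    exact Prv.topI
  | @bot n =>
    intro C σ ρ _ _ hforce
    refine local_char hforce (.bot) (fun z hz => absurd hz (Set.notMem_empty z)) ?_
    intro p hp
    exact absurd hp (Set.notMem_empty p)
  | @conj n φ ψ hφ hψ ihφ ihψ =>
    intro C σ ρ hσ hρ hforce
    exact Prv.conjI (ihφ C σ ρ (fun y hy => hσ y (Or.inl hy)) hρ hforce.1)
      (ihψ C σ ρ (fun y hy => hσ y (Or.inr hy)) hρ hforce.2)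
  | @disj n I f hf ihf =>
    intro C σ ρ hσ hρ hforce
    obtain ⟨U, hcovU, hbr⟩ := hforce
    refine local_char hcovU _ (fv_inst σ ρ _ hσ hρ) ?_
    intro p hpU
    obtain ⟨i, hforce_i⟩ := hbr p hpU
    obtain ⟨hmor1, _⟩ := Cov_mor hcovU p hpU
    rw [inst_substFv]
    refine Prv.disjI i ?_
    refine ihf i p.1 (fun y => (σ y).subst p.2) (fun i0 => (ρ i0).subst p.2) ?_ ?_ hforce_i
    · intro y hy z hz
      obtain ⟨x, hx, hfv⟩ := Set.mem_iUnion₂.mp (Tm.fv_subst p.2 (σ y) hz)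
      exact hmor1 x (hσ y (Set.mem_iUnion.mpr ⟨i, hy⟩) hx) hfv
    · intro i0 z hz
      obtain ⟨x, hx, hfv⟩ := Set.mem_iUnion₂.mp (Tm.fv_subst p.2 (ρ i0) hz)
      exact hmor1 x (hρ i0 hx) hfv
  | @ex n φ hφ ih =>
    intro C σ ρ hσ hρ hforce
    obtain ⟨U, hcovU, hbr⟩ := hforce
    refine local_char hcovU _ (fv_inst σ ρ _ hσ hρ) ?_
    intro p hpU
    obtain ⟨t, htfv, hforce_t⟩ := hbr p hpU
    obtain ⟨hmor1, _⟩ := Cov_mor hcovU p hpU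
    rw [inst_substFv]
    refine Prv.exI t htfv ?_
    have hσ' : ∀ y ∈ φ.fv, ((fun y => (σ y).subst p.2) y).fv ⊆ ↑p.1.X := by
      intro y hy z hz
      obtain ⟨x, hx, hfv⟩ := Set.mem_iUnion₂.mp (Tm.fv_subst p.2 (σ y) hz)
      exact hmor1 x (hσ y hy hx) hfv
    have hρ' : ∀ i0 : Fin (n + 1),
        ((Fin.snoc (fun i1 => (ρ i1).subst p.2) t : Fin (n + 1) → Tm F far) i0).fv
          ⊆ ↑p.1.X := by
      intro i0
      refine Fin.lastCases ?_ (fun j => ?_) i0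
      · rw [Fin.snoc_last]; exact htfv
      · rw [Fin.snoc_castSucc]
        intro z hz
        obtain ⟨x, hx, hfv⟩ := Set.mem_iUnion₂.mp (Tm.fv_subst p.2 (ρ j) hz)
        exact hmor1 x (hρ j hx) hfv
    have hprv := ih p.1 (fun y => (σ y).subst p.2)
      (Fin.snoc (fun i1 => (ρ i1).subst p.2) t) hσ' hρ' hforce_t
    rw [open0_inst]
    exact hprv
  | @all n φ hφ ih =>
    intro C σ ρ hσ hρ hforce
    have hxX : freshVar C 0 ∉ C.X := freshVar_not_mem C 0
    set x : ℕ := freshVar C 0 with hxdef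
    set D : Cond F far R rar :=
      ⟨insert x C.X, C.A, C.finA,
        fun a ha => (C.wf a ha).trans (Finset.coe_subset.mpr (Finset.subset_insert _ _))⟩
      with hDdef
    have hmor : Mor mc D C Tm.fvar := Mor.of_le (Finset.subset_insert _ _) le_rfl
    have hfvx : (Tm.fvar x : Tm F far).fv ⊆ ↑D.X := by
      intro z hz
      have : z = x := hz
      subst this
      exact Finset.mem_coe.mpr (Finset.mem_insert_self _ _)
    have hforce2 := hforce D Tm.fvar hmor (Tm.fvar x) hfvx
    have hσid : (fun y => (σ y).subst Tm.fvar) = σ := funext fun y => Tm.subst_id (σ y)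
    have hρid : (fun i : Fin n => (ρ i).subst Tm.fvar) = ρ := funext fun i => Tm.subst_id (ρ i)
    rw [hσid, hρid] at hforce2
    have hσ' : ∀ y ∈ φ.fv, (σ y).fv ⊆ ↑D.X := fun y hy =>
      (hσ y hy).trans (Finset.coe_subset.mpr (Finset.subset_insert _ _))
    have hρ' : ∀ i0 : Fin (n + 1),
        ((Fin.snoc ρ (Tm.fvar x) : Fin (n + 1) → Tm F far) i0).fv ⊆ ↑D.X := by
      intro i0
      refine Fin.lastCases ?_ (fun j => ?_) i0
      · rw [Fin.snoc_last]; exact hfvx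
      · rw [Fin.snoc_castSucc]
        exact (hρ j).trans (Finset.coe_subset.mpr (Finset.subset_insert _ _))
    have hprv := ih D σ (Fin.snoc ρ (Tm.fvar x)) hσ' hρ' hforce2
    refine Prv.allI x hxX ?_ (fun χ hχ hmem => hxX (Thy_fv χ hχ hmem)) ?_
    · intro hmem
      exact hxX (fv_inst σ ρ (.all φ) hσ hρ hmem)
    · rw [open0_inst]
      exact hprv
  | @impAtom n r ts φ hφ ih =>
    intro C σ ρ hσ hρ hforce
    set a₀ : Atom F far R rar := ⟨r, fun i => (ts i).eval σ ρ⟩ with ha₀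
    have ha₀fv : Atom.fv a₀ ⊆ ↑C.X := by
      intro z hz
      obtain ⟨i, hi⟩ := Set.mem_iUnion.mp hz
      rcases Tmc.fv_eval σ ρ (ts i) hi with h | h
      · obtain ⟨y, hy, hfv⟩ := Set.mem_iUnion₂.mp h
        exact hσ y (Or.inl (Set.mem_iUnion.mpr ⟨i, hy⟩)) hfv
      · obtain ⟨i0, hi0⟩ := Set.mem_iUnion.mp h
        exact hρ i0 hi0
    set D : Cond F far R rar :=
      ⟨C.X, insert a₀ C.A, C.finA.insert a₀, by
        rintro a (rfl | ha)
        · exact ha₀fv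
        · exact C.wf a ha⟩ with hDdef
    have hmor : Mor mc D C Tm.fvar := Mor.of_le le_rfl (Set.subset_insert _ _)
    have hσid : (fun y => (σ y).subst Tm.fvar) = σ := funext fun y => Tm.subst_id (σ y)
    have hρid : (fun i : Fin n => (ρ i).subst Tm.fvar) = ρ := funext fun i => Tm.subst_id (ρ i)
    have hforceAtom : Forces mc (Cov T) D (fun y => (σ y).subst Tm.fvar)
        (fun i => (ρ i).subst Tm.fvar) (.atom r ts) := by
      refine ⟨{(D, Tm.fvar)}, Cov.iso (IsIsoMor_id D), ?_⟩
      rintro p hp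
      rw [Set.mem_singleton_iff] at hp
      subst hp
      show (⟨r, fun i => ((ts i).eval _ _).subst Tm.fvar⟩ : Atom F far R rar) ∈ D.A
      rw [hσid, hρid]
      rw [show (fun i => ((ts i).eval σ ρ).subst Tm.fvar) = fun i => (ts i).eval σ ρ from
        funext fun i => Tm.subst_id _]
      exact Set.mem_insert _ _
    have hforce2 := hforce D Tm.fvar hmor hforceAtom
    rw [hσid, hρid] at hforce2
    have hprv := ih D σ ρ (fun y hy => hσ y (Or.inr hy)) hρ hforce2
    have hthy : Thy T D = insert (atomF a₀) (Thy T C) := by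
      show CohAx.toFml '' T ∪ atomF '' insert a₀ C.A = _
      rw [Set.image_insert_eq, Set.union_insert]
      rfl
    rw [hthy] at hprv
    refine Prv.impI ?_
    rw [atom_inst_eq σ ρ r ts, ← ha₀]
    exact hprv
  | @impTop n φ hφ ih =>
    intro C σ ρ hσ hρ hforce
    have hσid : (fun y => (σ y).subst Tm.fvar) = σ := funext fun y => Tm.subst_id (σ y)
    have hρid : (fun i : Fin n => (ρ i).subst Tm.fvar) = ρ := funext fun i => Tm.subst_id (ρ i)
    have hforce2 := hforce C Tm.fvar (Mor.of_le le_rfl le_rfl) trivial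
    rw [hσid, hρid] at hforce2
    have hprv := ih C σ ρ (fun y hy => hσ y (Or.inr hy)) hρ hforce2
    refine Prv.impI ?_
    refine Prv_mono hprv (Set.subset_insert _ _) ?_
    rintro χ (rfl | hχ)
    · exact fun z hz => absurd hz (Set.notMem_empty z)
    · exact Thy_fv χ hχ
  | @impBot n φ hφ _ =>
    intro C σ ρ _ _ _
    exact Prv.impI (Prv.botE (Prv.ax (Set.mem_insert _ _)))

/- STATEMENT 17: Completeness of the coherent forcing models (over renamings,
variable substitutions or term substitutions) for generalized geometric implications
without equality: if (X;A) ⊩ φρ then T, A ⊢_X φρ intuitionistically; in particular,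
if the empty condition forces a generalized geometric sentence φ, then T ⊢ φ. -/
theorem completeness_for_generalized_geometric_implications :
    (∀ (mc : MC) (T : Set (CohAx F far R rar)) (φ : Fml F far R rar 0), GGI φ →
      ∀ (C : Cond F far R rar) (ρ : ℕ → Tm F far),
        (∀ y ∈ Fml.fv φ, (ρ y).fv ⊆ ↑C.X) →
        Forces mc (Cov T) C ρ Fin.elim0 φ →
        Prv False C.X (CohAx.toFml '' T ∪ atomF '' C.A) (Fml.substFv ρ φ)) ∧
    (∀ (mc : MC) (T : Set (CohAx F far R rar)) (φ : Fml F far R rar 0), GGI φ →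
      Fml.fv φ = ∅ →
      Forces mc (Cov T) (emptyCond (F := F) (far := far) (R := R) (rar := rar))
        Tm.fvar Fin.elim0 φ →
      Prv False ∅ (CohAx.toFml '' T) φ) := by
  constructor
  · intro mc T φ hG C ρ hfv hforce
    have h := main_forcing (mc := mc) (T := T) hG C ρ Fin.elim0 hfv
      (fun i => i.elim0) hforce
    rwa [Fml.bsubst_zero] at h
  · intro mc T φ hG hfvempty hforce
    have h := main_forcing (mc := mc) (T := T) hG emptyCond Tm.fvar Fin.elim0
      (fun y hy => by rw [hfvempty] at hy; exact absurd hy (Set.notMem_empty y))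
      (fun i => i.elim0) hforce
    rw [Fml.bsubst_zero, Fml.substFv_id] at h
    have hthy : Thy T (emptyCond (F := F) (far := far) (R := R) (rar := rar))
        = CohAx.toFml '' T := by
      show CohAx.toFml '' T ∪ atomF '' (∅ : Set (Atom F far R rar)) = _
      rw [Set.image_empty, Set.union_empty]
    rwa [hthy] at h

end CoherentForcing
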